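/- arXiv:2107.02204 — 7 statements merged into one kernel-verified Lean document; each statement's English description precedes it below -/
import Mathlib

section
/- For integers b_1 ≥ b_2 ≥ ... ≥ b_r ≥ 0, the sequence of integers b_j in the expression p(t) = Σ_{j=1}^r C(t + b_j - j + 1, b_j) is uniquely determined by the polynomial p; that is, if two such weakly decreasing nonnegative sequences give the same polynomial, then the sequences are equal. -/
/-- The polynomial binomial coefficient `C(t+a, b) ∈ ℚ[t]`. -/
noncomputable def pbinom (a : ℤ) (b : ℕ) : Polynomial ℚ :=
  (b.factorial : ℚ)⁻¹ • ∏ k ∈ Finset.range b, (Polynomial.X + Polynomial.C ((a : ℚ) - (k : ℚ)))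

/-- The Gotzmann sum `Σ_{j=1}^r C(t + b_j - j + 1, b_j)` (here indexed from `j = 0`). -/
noncomputable def gotz (r : ℕ) (b : ℕ → ℕ) : Polynomial ℚ :=
  ∑ j ∈ Finset.range r, pbinom ((b j : ℤ) - (j : ℤ)) (b j)

open Polynomial

lemma prod_monic' (a : ℤ) (b : ℕ) :
    (∏ k ∈ Finset.range b, (X + C ((a : ℚ) - (k : ℚ)))).Monic :=
  monic_prod_of_monic _ _ fun k _ => monic_X_add_C _

lemma prod_natDegree' (a : ℤ) (b : ℕ) :
    (∏ k ∈ Finset.range b, (X + C ((a : ℚ) - (k : ℚ)))).natDegree = b := by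
  rw [natDegree_prod]
  · calc ∑ i ∈ Finset.range b, (X + C ((a : ℚ) - (i : ℚ))).natDegree
        = ∑ _i ∈ Finset.range b, 1 :=
          Finset.sum_congr rfl fun i _ => natDegree_X_add_C _
      _ = b := by simp
  · intro i _; exact (monic_X_add_C _).ne_zero

lemma pbinom_coeff_self (a : ℤ) (b : ℕ) : (pbinom a b).coeff b = (b.factorial : ℚ)⁻¹ := by
  rw [pbinom, coeff_smul]
  have h := (prod_monic' a b).coeff_natDegree
  rw [prod_natDegree'] at h
  rw [h]; simp

lemma pbinom_coeff_of_lt {a : ℤ} {b m : ℕ} (h : b < m) : (pbinom a b).coeff m = 0 := by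
  rw [pbinom, coeff_smul,
    coeff_eq_zero_of_natDegree_lt (by rw [prod_natDegree']; exact h)]
  simp

lemma pbinom_comp (a : ℤ) (b : ℕ) :
    (pbinom a b).comp (X - C 1) = pbinom (a - 1) b := by
  rw [pbinom, pbinom, smul_comp, prod_comp]
  congr 1
  apply Finset.prod_congr rfl
  intro k _
  simp only [add_comp, sub_comp, X_comp, C_comp, C_sub, C_1, Int.cast_sub, Int.cast_one]
  ring

lemma comp_sub_one_inj {p q : Polynomial ℚ} (h : p.comp (X - C 1) = q.comp (X - C 1)) :
    p = q := by
  have h2 := congrArg (fun f => f.comp (X + C 1)) h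
  simp only [comp_assoc] at h2
  have h3 : ((X - C 1 : Polynomial ℚ)).comp (X + C 1) = (X : Polynomial ℚ) := by
    simp [sub_comp]
  rw [h3, comp_X, comp_X] at h2
  exact h2

lemma gotz_coeff_zero {r : ℕ} {b : ℕ → ℕ} (hb : ∀ i j, i ≤ j → j < r → b j ≤ b i)
    {m : ℕ} (hm : b 0 < m) : (gotz r b).coeff m = 0 := by
  rw [gotz, finset_sum_coeff]
  apply Finset.sum_eq_zero
  intro j hj
  exact pbinom_coeff_of_lt
    (lt_of_le_of_lt (hb 0 j (Nat.zero_le j) (Finset.mem_range.mp hj)) hm)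

lemma gotz_coeff_pos {r : ℕ} {b : ℕ → ℕ} (hr : 0 < r)
    (hb : ∀ i j, i ≤ j → j < r → b j ≤ b i) :
    0 < (gotz r b).coeff (b 0) := by
  rw [gotz, finset_sum_coeff]
  apply Finset.sum_pos'
  · intro j hj
    rcases lt_or_eq_of_le (hb 0 j (Nat.zero_le j) (Finset.mem_range.mp hj)) with h | h
    · rw [pbinom_coeff_of_lt h]
    · rw [h, pbinom_coeff_self]
      positivity
  · refine ⟨0, Finset.mem_range.mpr hr, ?_⟩
    have : ((b 0 : ℤ) - (0 : ℕ)) = (b 0 : ℤ) := by simp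
    rw [this, pbinom_coeff_self]
    positivity

lemma gotz_succ (r : ℕ) (b : ℕ → ℕ) :
    gotz (r + 1) b = (gotz r (fun j => b (j + 1))).comp (X - C 1)
      + pbinom ((b 0 : ℤ)) (b 0) := by
  rw [gotz, Finset.sum_range_succ', gotz, sum_comp]
  congr 1
  · apply Finset.sum_congr rfl
    intro j _
    rw [pbinom_comp]
    congr 1
    push_cast
    ring

/-- Uniqueness of Gotzmann expressions: two weakly decreasing nonnegative sequences
giving the same polynomial are equal. -/
theorem gotzmann_unique (r s : ℕ) (b c : ℕ → ℕ)
    (hb : ∀ i j : ℕ, i ≤ j → j < r → b j ≤ b i)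
    (hc : ∀ i j : ℕ, i ≤ j → j < s → c j ≤ c i)
    (h : gotz r b = gotz s c) :
    r = s ∧ ∀ j < r, b j = c j := by
  induction r generalizing s b c with
  | zero =>
    cases s with
    | zero => exact ⟨rfl, fun j hj => absurd hj (Nat.not_lt_zero j)⟩
    | succ s' =>
      exfalso
      have hpos := gotz_coeff_pos (Nat.succ_pos s') hc
      rw [← h] at hpos
      simp [gotz] at hpos
  | succ r' ih =>
    cases s with
    | zero =>
      exfalso
      have hpos := gotz_coeff_pos (Nat.succ_pos r') hb
      rw [h] at hpos
      simp [gotz] at hpos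
    | succ s' =>
      have hb0 : b 0 = c 0 := by
        by_contra hne
        rcases Nat.lt_or_ge (b 0) (c 0) with hlt | hge
        · have h1 := gotz_coeff_pos (Nat.succ_pos s') hc
          rw [← h, gotz_coeff_zero hb hlt] at h1
          exact lt_irrefl 0 h1
        · have hlt : c 0 < b 0 := lt_of_le_of_ne hge fun e => hne e.symm
          have h1 := gotz_coeff_pos (Nat.succ_pos r') hb
          rw [h, gotz_coeff_zero hc hlt] at h1
          exact lt_irrefl 0 h1
      rw [gotz_succ r' b, gotz_succ s' c, hb0] at h
      have h2 := add_right_cancel h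
      have h3 := comp_sub_one_inj h2
      have hb' : ∀ i j, i ≤ j → j < r' → b (j + 1) ≤ b (i + 1) :=
        fun i j hij hj => hb (i + 1) (j + 1) (by omega) (by omega)
      have hc' : ∀ i j, i ≤ j → j < s' → c (j + 1) ≤ c (i + 1) :=
        fun i j hij hj => hc (i + 1) (j + 1) (by omega) (by omega)
      obtain ⟨hrs, hbc⟩ := ih _ _ _ hb' hc' h3
      refine ⟨by omega, ?_⟩
      intro j hj
      cases j with
      | zero => exact hb0
      | succ k => exact hbc k (by omega)
end

section
/- Over a field K of characteristic p > 0, a monomial ideal I ⊆ K[x_0, ..., x_n] satisfying Pardue's criterion is Borel-fixed: if for each monomial x^u ∈ I, each pair i < j, and each k ≤_p u_j, one has x_j^{-k} x_i^k x^u ∈ I, then I is fixed by all invertible upper-triangular matrices acting linearly on the variables. -/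
open MvPolynomial

/-- A matrix is upper triangular if entries below the diagonal vanish. -/
def UpperTriangular {K : Type} [Field K] {m : ℕ} (γ : Matrix (Fin m) (Fin m) K) : Prop :=
  ∀ i j : Fin m, j < i → γ i j = 0

/-- The linear action of a matrix `γ` on the polynomial ring, `γ · x_j = Σ_i γ_{ij} x_i`. -/
noncomputable def borelAct {K : Type} [Field K] {m : ℕ} (γ : Matrix (Fin m) (Fin m) K) :
    MvPolynomial (Fin m) K →+* MvPolynomial (Fin m) K :=
  (aeval (fun j => ∑ i, C (γ i j) * X i)).toRingHom

/-- An ideal is Borel-fixed if it is fixed by every invertible upper-triangular matrix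
acting linearly on the variables. -/
def BorelFixed {K : Type} [Field K] {m : ℕ} (I : Ideal (MvPolynomial (Fin m) K)) : Prop :=
  ∀ γ : Matrix (Fin m) (Fin m) K, UpperTriangular γ → IsUnit γ.det →
    Ideal.map (borelAct γ) I = I

/-- A monomial ideal: with every polynomial it contains all of its monomials. -/
def IsMonomialIdeal {K : Type} [Field K] {m : ℕ} (I : Ideal (MvPolynomial (Fin m) K)) : Prop :=
  ∀ f ∈ I, ∀ u ∈ f.support, (monomial u 1 : MvPolynomial (Fin m) K) ∈ I

/-- The strong stability exchange condition: `m ∈ I`, `x_j ∣ m`, `i < j` imply `x_i m / x_j ∈ I`. -/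
def StronglyStable {K : Type} [Field K] {m : ℕ} (I : Ideal (MvPolynomial (Fin m) K)) : Prop :=
  ∀ u : Fin m →₀ ℕ, (monomial u 1 : MvPolynomial (Fin m) K) ∈ I →
    ∀ i j : Fin m, i < j → u j ≠ 0 →
      (monomial (u + Finsupp.single i 1 - Finsupp.single j 1) 1 : MvPolynomial (Fin m) K) ∈ I

/-- The saturation `(I : J^∞) = ⋃_k (I : J^k)`. -/
noncomputable def idealSat {R : Type} [CommRing R] (I J : Ideal R) : Ideal R :=
  ⨆ k : ℕ, Submodule.colon I ((J ^ k : Ideal R) : Set R)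

/-- The irrelevant maximal ideal `⟨x_0, …, x_m⟩`. -/
noncomputable def irrelevant (m : ℕ) (K : Type) [Field K] : Ideal (MvPolynomial (Fin m) K) :=
  Ideal.span (Set.range X)

/-- The Hilbert function of `S/I`: the dimension of the image of the degree-`i`
homogeneous component in `S/I`. -/
noncomputable def hfn {K : Type} [Field K] {m : ℕ} (I : Ideal (MvPolynomial (Fin m) K))
    (i : ℕ) : ℕ :=
  Module.finrank K
    ((homogeneousSubmodule (Fin m) K i).map (Ideal.Quotient.mkₐ K I).toLinearMap)

/-- The set of (exponents of) minimal monomial generators of a monomial ideal. -/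
def minGens {K : Type} [Field K] {m : ℕ} (I : Ideal (MvPolynomial (Fin m) K)) :
    Set (Fin m →₀ ℕ) :=
  {u | (monomial u 1 : MvPolynomial (Fin m) K) ∈ I ∧
    ∀ v : Fin m →₀ ℕ, v ≤ u → v ≠ u → (monomial v 1 : MvPolynomial (Fin m) K) ∉ I}

/-- `k ≤_p ℓ`: every base-`p` digit of `k` is at most the corresponding digit of `ℓ`. -/
def baseLE (p k l : ℕ) : Prop :=
  ∀ i : ℕ, (Nat.digits p k).getD i 0 ≤ (Nat.digits p l).getD i 0

/-! ### Auxiliary lemmas for the proof -/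

section Aux

open Finset

open scoped Classical

variable {K : Type} [Field K] {m : ℕ}

lemma borelAct_C (γ : Matrix (Fin m) (Fin m) K) (r : K) : borelAct γ (C r) = C r := by
  simp [borelAct]

lemma borelAct_X (γ : Matrix (Fin m) (Fin m) K) (j : Fin m) :
    borelAct γ (X j) = ∑ i, C (γ i j) * X i := by
  simp [borelAct]

lemma sum_C_ite (l : Fin m) (d : K) :
    (∑ a, C (if a = l then d else 0) * X a) = C d * X l := by
  rw [Finset.sum_eq_single l (fun a _ ha => by simp [ha]) (by simp)]
  simp

lemma borelAct_comp (γ δ : Matrix (Fin m) (Fin m) K) :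
    (borelAct δ).comp (borelAct γ) = borelAct (δ * γ) := by
  apply MvPolynomial.ringHom_ext
  · intro r
    simp [borelAct]
  · intro j
    simp only [RingHom.comp_apply]
    rw [borelAct_X, map_sum, borelAct_X]
    simp only [map_mul, borelAct_C, borelAct_X, Matrix.mul_apply, Finset.mul_sum, map_sum,
      Finset.sum_mul]
    rw [Finset.sum_comm]
    refine Finset.sum_congr rfl fun k _ => Finset.sum_congr rfl fun i _ => ?_
    ring

lemma borelAct_one : borelAct (1 : Matrix (Fin m) (Fin m) K) = RingHom.id _ := by
  apply MvPolynomial.ringHom_ext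
  · intro r
    simp [borelAct]
  · intro j
    rw [borelAct_X]
    have h : ∀ a : Fin m, (1 : Matrix (Fin m) (Fin m) K) a j = if a = j then 1 else 0 := by
      intro a
      by_cases h : a = j <;> simp [Matrix.one_apply, h]
    simp only [h]
    rw [sum_C_ite]
    simp

lemma borelAct_monomial_one (γ : Matrix (Fin m) (Fin m) K) (v : Fin m →₀ ℕ) :
    borelAct γ (monomial v (1 : K)) = v.prod fun l e => (borelAct γ (X l)) ^ e := by
  simp only [borelAct, AlgHom.toRingHom_eq_coe, RingHom.coe_coe, aeval_monomial, aeval_X, map_one,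
    one_mul]

lemma borelAct_mem_of_monomials (I : Ideal (MvPolynomial (Fin m) K)) (hmon : IsMonomialIdeal I)
    (γ : Matrix (Fin m) (Fin m) K)
    (h : ∀ u : Fin m →₀ ℕ, (monomial u 1 : MvPolynomial (Fin m) K) ∈ I →
      borelAct γ (monomial u 1) ∈ I) :
    Ideal.map (borelAct γ) I ≤ I := by
  rw [Ideal.map_le_iff_le_comap]
  intro f hf
  rw [Ideal.mem_comap]
  have hrw : borelAct γ f = ∑ v ∈ f.support, borelAct γ (monomial v (coeff v f)) := by
    rw [← map_sum, support_sum_monomial_coeff]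
  rw [hrw]
  refine Ideal.sum_mem _ fun v hv => ?_
  have h1 : monomial v (coeff v f) = C (coeff v f) * monomial v (1 : K) := by
    rw [C_mul_monomial, mul_one]
  rw [h1, map_mul, borelAct_C]
  exact Ideal.mul_mem_left _ _ (h v (hmon f hf v hv))

lemma borelAct_diag_monomial (γ : Matrix (Fin m) (Fin m) K)
    (hγ : ∀ a b : Fin m, a ≠ b → γ a b = 0) (v : Fin m →₀ ℕ) :
    borelAct γ (monomial v (1 : K)) =
      C (v.prod fun l e => γ l l ^ e) * monomial v 1 := by
  rw [borelAct_monomial_one]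
  have hX : ∀ l : Fin m, borelAct γ (X l) = C (γ l l) * X l := by
    intro l
    rw [borelAct_X]
    exact Finset.sum_eq_single l (fun a _ ha => by rw [hγ a l ha, C_0, zero_mul]) (by simp)
  simp only [hX]
  rw [monomial_eq, C_1, one_mul]
  simp only [Finsupp.prod, mul_pow, ← C_pow]
  rw [Finset.prod_mul_distrib, map_prod]

/-! #### digits and Lucas -/

lemma getD_digits {p : ℕ} (hp2 : 2 ≤ p) : ∀ (idx n : ℕ),
    (Nat.digits p n).getD idx 0 = n / p ^ idx % p := by
  intro idx
  induction idx with
  | zero =>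
    intro n
    rcases Nat.eq_zero_or_pos n with h | h
    · simp [h]
    · rw [Nat.digits_def' (by omega : 1 < p) h]
      simp
  | succ k ih =>
    intro n
    rcases Nat.eq_zero_or_pos n with h | h
    · simp [h]
    · rw [Nat.digits_def' (by omega : 1 < p) h]
      show (Nat.digits p (n / p)).getD k 0 = _
      rw [ih (n / p), Nat.div_div_eq_div_mul, ← pow_succ']

lemma baseLE_of_not_dvd {p : ℕ} (hp : p.Prime) {N k : ℕ} (h : ¬ p ∣ N.choose k) :
    baseLE p k N := by
  haveI : Fact p.Prime := ⟨hp⟩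
  intro idx
  rw [getD_digits hp.two_le, getD_digits hp.two_le]
  by_contra hlt
  push_neg at hlt
  set a := max N k + 1 with ha
  have hN : N < p ^ a :=
    lt_of_lt_of_le (Nat.lt_pow_self (n := N) hp.one_lt)
      (Nat.pow_le_pow_right hp.pos (by omega))
  have hk : k < p ^ a :=
    lt_of_lt_of_le (Nat.lt_pow_self (n := k) hp.one_lt)
      (Nat.pow_le_pow_right hp.pos (by omega))
  have hidx : idx < a := by
    by_contra hge
    push_neg at hge
    have h0 : k / p ^ idx = 0 :=
      Nat.div_eq_of_lt (lt_of_lt_of_le hk (Nat.pow_le_pow_right hp.pos hge))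
    rw [h0] at hlt
    simp at hlt
  have hmod := Choose.lucas_theorem_nat (p := p) hN hk
  have hzero : ∏ i ∈ Finset.range a, (N / p ^ i % p).choose (k / p ^ i % p) = 0 :=
    Finset.prod_eq_zero (Finset.mem_range.mpr hidx) (Nat.choose_eq_zero_of_lt hlt)
  rw [hzero] at hmod
  exact h ((Nat.modEq_zero_iff_dvd).mp hmod)

/-! #### transvections -/

lemma borelAct_transvection_X_ne {i j : Fin m} (c : K) {l : Fin m} (hl : l ≠ j) :
    borelAct (Matrix.transvection i j c) (X l) = X l := by
  rw [borelAct_X]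
  have h : ∀ a : Fin m, Matrix.transvection i j c a l = if a = l then 1 else 0 := by
    intro a
    rw [Matrix.transvection, Matrix.add_apply,
      Matrix.single_apply_of_ne (i := i) (j := j) (c := c) (i' := a) (j' := l) (fun hh => hl hh.2.symm), add_zero]
    exact Matrix.one_apply
  simp only [h]
  rw [sum_C_ite]
  simp

lemma borelAct_transvection_X_same {i j : Fin m} (hij : i ≠ j) (c : K) :
    borelAct (Matrix.transvection i j c) (X j) = C c * X i + X j := by
  rw [borelAct_X]
  have h : ∀ a : Fin m, Matrix.transvection i j c a j =
      (if a = i then c else 0) + (if a = j then 1 else 0) := by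
    intro a
    rw [Matrix.transvection, Matrix.add_apply, add_comm]
    by_cases h : a = i
    · subst h
      simp [Matrix.one_apply, hij]
    · simp [Matrix.single_apply_of_ne (i := i) (j := j) (c := c) (i' := a) (j' := j) (fun hh => h hh.1.symm),
        Matrix.one_apply, h]
  simp only [h, C_add, add_mul]
  rw [Finset.sum_add_distrib, sum_C_ite, sum_C_ite]
  simp

lemma borelAct_transvection_monomial_nojj {i j : Fin m} (c : K) (v : Fin m →₀ ℕ)
    (hv : v j = 0) :
    borelAct (Matrix.transvection i j c) (monomial v (1 : K)) = monomial v 1 := by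
  rw [borelAct_monomial_one]
  conv_rhs => rw [monomial_eq, C_1, one_mul]
  refine Finsupp.prod_congr fun l hl => ?_
  have hlj : l ≠ j := by
    intro h
    subst h
    exact (Finsupp.mem_support_iff.mp hl) hv
  rw [borelAct_transvection_X_ne c hlj]

lemma exponent_eq {i j : Fin m} (hij : i ≠ j) (u : Fin m →₀ ℕ) {k : ℕ} (hk : k ≤ u j) :
    u.erase j + (Finsupp.single i k + Finsupp.single j (u j - k))
      = u + Finsupp.single i k - Finsupp.single j k := by
  ext l
  rcases eq_or_ne l j with rfl | hlj
  · simp only [Finsupp.add_apply, Finsupp.tsub_apply, Finsupp.erase_same,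
      Finsupp.single_eq_of_ne' hij, Finsupp.single_eq_same]
    omega
  · simp only [Finsupp.add_apply, Finsupp.tsub_apply, Finsupp.erase_ne hlj,
      Finsupp.single_eq_of_ne' (Ne.symm hlj)]
    omega

lemma transvection_monomial_mem {p : ℕ} (hp : p.Prime) [CharP K p]
    (I : Ideal (MvPolynomial (Fin m) K))
    (hpardue : ∀ u : Fin m →₀ ℕ, (monomial u 1 : MvPolynomial (Fin m) K) ∈ I →
      ∀ i j : Fin m, i < j → ∀ k : ℕ, baseLE p k (u j) →
        (monomial (u + Finsupp.single i k - Finsupp.single j k) 1 :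
          MvPolynomial (Fin m) K) ∈ I)
    {i j : Fin m} (hij : i < j) (c : K)
    (u : Fin m →₀ ℕ) (hu : (monomial u 1 : MvPolynomial (Fin m) K) ∈ I) :
    borelAct (Matrix.transvection i j c) (monomial u (1 : K)) ∈ I := by
  have hne : i ≠ j := ne_of_lt hij
  have hdec : (monomial u (1 : K)) = monomial (u.erase j) 1 * X j ^ (u j) := by
    rw [X_pow_eq_monomial, monomial_mul, mul_one, Finsupp.erase_add_single]
  rw [hdec, map_mul, map_pow, borelAct_transvection_X_same hne c,
    borelAct_transvection_monomial_nojj c _ (Finsupp.erase_same), add_pow, Finset.mul_sum]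
  refine Ideal.sum_mem _ fun k hk => ?_
  rw [Finset.mem_range, Nat.lt_succ_iff] at hk
  by_cases hzero : ((u j).choose k : K) = 0
  · have hz : (((u j).choose k : ℕ) : MvPolynomial (Fin m) K) = 0 := by
      rw [← map_natCast (C : K →+* MvPolynomial (Fin m) K), hzero, map_zero]
    rw [hz, mul_zero, mul_zero]
    exact I.zero_mem
  · have hdvd : ¬ p ∣ (u j).choose k := by
      intro hd
      exact hzero ((CharP.cast_eq_zero_iff K p _).mpr hd)
    have hkle : baseLE p k (u j) := baseLE_of_not_dvd hp hdvd
    have hmem := hpardue u hu i j hij k hkle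
    have hmono : monomial (u.erase j) (1 : K) *
        ((C c * X i) ^ k * X j ^ (u j - k) * (((u j).choose k : ℕ) : MvPolynomial (Fin m) K))
        = C (c ^ k * ((u j).choose k : K)) *
          monomial (u + Finsupp.single i k - Finsupp.single j k) 1 := by
      rw [← exponent_eq hne u hk]
      rw [show monomial (u.erase j + (Finsupp.single i k + Finsupp.single j (u j - k)))
            (1 : K) = monomial (u.erase j) 1 *
              (monomial (Finsupp.single i k) 1 * monomial (Finsupp.single j (u j - k)) 1) by
          rw [monomial_mul, monomial_mul, one_mul, one_mul]]
      rw [← map_natCast (C : K →+* MvPolynomial (Fin m) K), mul_pow, ← C_pow,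
        X_pow_eq_monomial, X_pow_eq_monomial, C_mul]
      ring
    rw [hmono]
    exact Ideal.mul_mem_left _ _ hmem

/-! #### the weight function and column reduction -/

/-- The weight of column `j`: sum of `2 ^ i` over strictly-upper nonzero entries in column `j`. -/
noncomputable def colwt (γ : Matrix (Fin m) (Fin m) K) (j : Fin m) : ℕ :=
  ∑ a ∈ Finset.univ.filter (fun a : Fin m => a < j ∧ γ a j ≠ 0), 2 ^ (a : ℕ)

/-- Total weight of the strictly-upper part of a matrix. -/
noncomputable def wt (γ : Matrix (Fin m) (Fin m) K) : ℕ := ∑ j, colwt γ j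

lemma two_pow_sum_lt (t : ℕ) : ∑ a ∈ Finset.range t, 2 ^ a < 2 ^ t := by
  induction t with
  | zero => simp
  | succ t ih =>
    rw [Finset.sum_range_succ, pow_succ]
    omega

lemma fin_sum_two_pow_lt (s : Finset (Fin m)) (i : Fin m) (h : ∀ a ∈ s, a < i) :
    ∑ a ∈ s, 2 ^ (a : ℕ) < 2 ^ (i : ℕ) := by
  have h1 : ∑ a ∈ s, 2 ^ (a : ℕ) = ∑ b ∈ s.image Fin.val, 2 ^ b := by
    rw [Finset.sum_image (fun x _ y _ hxy => Fin.val_injective hxy)]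
  have h2 : s.image Fin.val ⊆ Finset.range i.val := by
    intro b hb
    rw [Finset.mem_image] at hb
    obtain ⟨a, ha, rfl⟩ := hb
    exact Finset.mem_range.mpr (h a ha)
  calc ∑ a ∈ s, 2 ^ (a : ℕ) = ∑ b ∈ s.image Fin.val, 2 ^ b := h1
    _ ≤ ∑ b ∈ Finset.range i.val, 2 ^ b := Finset.sum_le_sum_of_subset h2
    _ < 2 ^ (i : ℕ) := two_pow_sum_lt _

lemma colwt_lt {γ : Matrix (Fin m) (Fin m) K} {j i : Fin m}
    (h : ∀ a : Fin m, a < j → γ a j ≠ 0 → a < i) : colwt γ j < 2 ^ (i : ℕ) := by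
  refine fin_sum_two_pow_lt _ i fun a ha => ?_
  rw [Finset.mem_filter] at ha
  exact h a ha.2.1 ha.2.2

lemma le_colwt (γ : Matrix (Fin m) (Fin m) K) {i j : Fin m} (hij : i < j) (hγ : γ i j ≠ 0) :
    2 ^ (i : ℕ) ≤ colwt γ j :=
  Finset.single_le_sum (f := fun a : Fin m => 2 ^ (a : ℕ)) (fun _ _ => Nat.zero_le _)
    (Finset.mem_filter.mpr ⟨Finset.mem_univ _, hij, hγ⟩)

lemma colwt_congr {γ γ' : Matrix (Fin m) (Fin m) K} {j : Fin m}
    (h : ∀ a, γ' a j = γ a j) : colwt γ' j = colwt γ j := by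
  unfold colwt
  congr 1
  apply Finset.filter_congr
  intro a _
  rw [h a]

lemma offdiag_zero_of_wt_zero {γ : Matrix (Fin m) (Fin m) K} (h : wt γ = 0)
    (hUT : UpperTriangular γ) : ∀ a b : Fin m, a ≠ b → γ a b = 0 := by
  intro a b hab
  rcases lt_or_gt_of_ne hab with hlt | hgt
  · by_contra hne
    have h1 : 2 ^ (a : ℕ) ≤ colwt γ b := le_colwt γ hlt hne
    have h2 : colwt γ b ≤ wt γ :=
      Finset.single_le_sum (f := fun j => colwt γ j) (fun _ _ => Nat.zero_le _)
        (Finset.mem_univ b)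
    have h3 : 0 < 2 ^ (a : ℕ) := by positivity
    omega
  · exact hUT a b hgt

/-! #### the main induction -/

lemma key_step {p : ℕ} (hp : p.Prime) [CharP K p]
    (I : Ideal (MvPolynomial (Fin m) K)) (hmon : IsMonomialIdeal I)
    (hpardue : ∀ u : Fin m →₀ ℕ, (monomial u 1 : MvPolynomial (Fin m) K) ∈ I →
      ∀ i j : Fin m, i < j → ∀ k : ℕ, baseLE p k (u j) →
        (monomial (u + Finsupp.single i k - Finsupp.single j k) 1 :
          MvPolynomial (Fin m) K) ∈ I) :
    ∀ (w : ℕ) (γ : Matrix (Fin m) (Fin m) K), UpperTriangular γ → IsUnit γ.det →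
      wt γ ≤ w → Ideal.map (borelAct γ) I ≤ I := by
  intro w
  induction w with
  | zero =>
    intro γ hUT hdet hw
    have hdiag := offdiag_zero_of_wt_zero (Nat.le_zero.mp hw) hUT
    refine borelAct_mem_of_monomials I hmon γ fun u hu => ?_
    rw [borelAct_diag_monomial γ hdiag]
    exact Ideal.mul_mem_left _ _ hu
  | succ w ih =>
    intro γ hUT hdet hw
    by_cases h0 : wt γ ≤ w
    · exact ih γ hUT hdet h0
    have hpos : wt γ ≠ 0 := by omega
    obtain ⟨j, hj⟩ : ∃ j, colwt γ j ≠ 0 := by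
      by_contra h
      push_neg at h
      exact hpos (Finset.sum_eq_zero fun j _ => h j)
    have hS : (Finset.univ.filter (fun a : Fin m => a < j ∧ γ a j ≠ 0)).Nonempty := by
      by_contra h
      rw [Finset.not_nonempty_iff_eq_empty] at h
      apply hj
      unfold colwt
      rw [h, Finset.sum_empty]
    set i := (Finset.univ.filter (fun a : Fin m => a < j ∧ γ a j ≠ 0)).max' hS with hidef
    have hiS := Finset.max'_mem _ hS
    rw [Finset.mem_filter] at hiS
    obtain ⟨-, hij, hγij⟩ := hiS
    have hmax : ∀ a : Fin m, a < j → γ a j ≠ 0 → a ≤ i := fun a h1 h2 =>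
      Finset.le_max' _ _ (Finset.mem_filter.mpr ⟨Finset.mem_univ _, h1, h2⟩)
    have hne : i ≠ j := ne_of_lt hij
    have hii : γ i i ≠ 0 := by
      have hdet2 := hdet
      rw [Matrix.det_of_upperTriangular (fun a b h => hUT a b h)] at hdet2
      have := isUnit_iff_ne_zero.mp hdet2
      rw [Finset.prod_ne_zero_iff] at this
      exact this i (Finset.mem_univ i)
    set c := γ i j / γ i i with hc
    set γ' := γ * Matrix.transvection i j (-c) with hγ'
    have hentry_ne : ∀ (a b : Fin m), b ≠ j → γ' a b = γ a b := fun a b hb =>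
      Matrix.mul_transvection_apply_of_ne i j a b hb (-c) γ
    have hentry_j : ∀ a : Fin m, γ' a j = γ a j + (-c) * γ a i := fun a =>
      Matrix.mul_transvection_apply_same i j a (-c) γ
    have hUT' : UpperTriangular γ' := by
      intro a b hba
      rcases eq_or_ne b j with rfl | hbj
      · rw [hentry_j, hUT a b hba, hUT a i (lt_trans hij hba)]
        ring
      · rw [hentry_ne a b hbj]
        exact hUT a b hba
    have hdet' : IsUnit γ'.det := by
      rw [hγ', Matrix.det_mul, Matrix.det_transvection_of_ne _ _ hne, mul_one]
      exact hdet
    have hcolj : ∀ a : Fin m, a < j → γ' a j ≠ 0 → a < i := by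
      intro a haj hne0
      rcases lt_trichotomy a i with h | h | h
      · exact h
      · exfalso
        apply hne0
        subst h
        rw [hentry_j, hc]
        field_simp
        ring
      · exfalso
        apply hne0
        rw [hentry_j, hUT a i h, mul_zero, add_zero]
        by_contra h'
        exact absurd (hmax a haj h') (not_le.mpr h)
    have hwtlt : wt γ' < wt γ := by
      have hcoljlt : colwt γ' j < colwt γ j :=
        lt_of_lt_of_le (colwt_lt hcolj) (le_colwt γ hij hγij)
      unfold wt
      refine Finset.sum_lt_sum (fun b _ => ?_) ⟨j, Finset.mem_univ j, hcoljlt⟩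
      rcases eq_or_ne b j with rfl | hbj
      · exact le_of_lt hcoljlt
      · rw [colwt_congr (fun a => hentry_ne a b hbj)]
    have hdecomp : γ = γ' * Matrix.transvection i j c := by
      rw [hγ', Matrix.mul_assoc, Matrix.transvection_mul_transvection_same _ _ hne,
        neg_add_cancel, Matrix.transvection_zero, Matrix.mul_one]
    have hmapE : Ideal.map (borelAct (Matrix.transvection i j c)) I ≤ I :=
      borelAct_mem_of_monomials I hmon _ fun u hu =>
        transvection_monomial_mem hp I hpardue hij c u hu
    calc Ideal.map (borelAct γ) I
        = Ideal.map ((borelAct γ').comp (borelAct (Matrix.transvection i j c))) I := by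
          rw [borelAct_comp, ← hdecomp]
      _ = Ideal.map (borelAct γ') (Ideal.map (borelAct (Matrix.transvection i j c)) I) :=
          (Ideal.map_map _ _).symm
      _ ≤ Ideal.map (borelAct γ') I := Ideal.map_mono hmapE
      _ ≤ I := ih γ' hUT' hdet' (by omega)

end Aux

/-- Pardue's criterion: over a field of characteristic `p > 0`, a monomial ideal such that
for each monomial `x^u ∈ I`, each pair `i < j`, and each `k ≤_p u_j`, also
`x_j^{-k} x_i^k x^u ∈ I`, is Borel-fixed. -/
theorem pardue_criterion_borelFixed {K : Type} [Field K] (p : ℕ) (hp : p.Prime)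
    [CharP K p] (n : ℕ) (I : Ideal (MvPolynomial (Fin (n + 1)) K))
    (hmon : IsMonomialIdeal I)
    (hpardue : ∀ u : Fin (n + 1) →₀ ℕ, (monomial u 1 : MvPolynomial (Fin (n + 1)) K) ∈ I →
      ∀ i j : Fin (n + 1), i < j → ∀ k : ℕ, baseLE p k (u j) →
        (monomial (u + Finsupp.single i k - Finsupp.single j k) 1 :
          MvPolynomial (Fin (n + 1)) K) ∈ I) :
    BorelFixed I := by
  intro γ hUT hdet
  have hsub := key_step hp I hmon hpardue
  refine le_antisymm (hsub (wt γ) γ hUT hdet le_rfl) ?_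
  have hUTinv : UpperTriangular γ⁻¹ := by
    haveI := γ.invertibleOfIsUnitDet hdet
    exact fun a b h =>
      Matrix.blockTriangular_inv_of_blockTriangular (fun x y hxy => hUT x y hxy) h
  have hdetinv : IsUnit γ⁻¹.det := γ.isUnit_nonsing_inv_det hdet
  have h1 : Ideal.map (borelAct (γ * γ⁻¹)) I = I := by
    rw [Matrix.mul_nonsing_inv _ hdet, borelAct_one, Ideal.map_id]
  calc I = Ideal.map (borelAct (γ * γ⁻¹)) I := h1.symm
    _ = Ideal.map (borelAct γ) (Ideal.map (borelAct γ⁻¹) I) := by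
        rw [Ideal.map_map, borelAct_comp]
    _ ≤ Ideal.map (borelAct γ) I :=
        Ideal.map_mono (hsub (wt γ⁻¹) γ⁻¹ hUTinv hdetinv le_rfl)
end

section
/- Let I ⊆ S = K[x_0, ..., x_n] be a Borel-fixed monomial ideal over an infinite field K. Then for every 0 ≤ k ≤ n, the saturation of I with respect to the ideal m_k = ⟨x_0, ..., x_k⟩ equals the saturation of I with respect to the single variable x_k: (I : m_k^∞) = (I : x_k^∞). -/
open MvPolynomial

section Aux

variable {K : Type} [Field K] {m : ℕ}

lemma monomial_mem_of_le {I : Ideal (MvPolynomial (Fin m) K)} {a b : Fin m →₀ ℕ}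
    (hab : a ≤ b) (ha : (monomial a 1 : MvPolynomial (Fin m) K) ∈ I) :
    (monomial b 1 : MvPolynomial (Fin m) K) ∈ I := by
  have : (monomial b 1 : MvPolynomial (Fin m) K) = monomial (b - a) 1 * monomial a 1 := by
    rw [monomial_mul, one_mul, tsub_add_cancel_of_le hab]
  rw [this]
  exact Ideal.mul_mem_left _ _ ha

lemma coeff_single_pow {i j : Fin m} (hij : i ≠ j) (n : ℕ) :
    coeff (Finsupp.single i n) ((X i + X j : MvPolynomial (Fin m) K) ^ n) = 1 := by
  induction n with
  | zero => simp
  | succ n ih =>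
    rw [pow_succ, mul_add]
    have h1 : (Finsupp.single i (n + 1) : Fin m →₀ ℕ)
        = Finsupp.single i n + Finsupp.single i 1 := by
      rw [← Finsupp.single_add]
    rw [coeff_add, h1, coeff_mul_X, ih, coeff_mul_X']
    have hj : j ∉ (Finsupp.single i n + Finsupp.single i 1).support := by
      simp only [Finsupp.mem_support_iff, Finsupp.add_apply, Finsupp.single_apply]
      simp [hij]
    rw [if_neg hj, add_zero]

lemma swap_mem {I : Ideal (MvPolynomial (Fin m) K)} (hmon : IsMonomialIdeal I)
    (hbf : BorelFixed I) {i j : Fin m} (hij : i < j) {w : Fin m →₀ ℕ}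
    (hw : (monomial w 1 : MvPolynomial (Fin m) K) ∈ I) :
    (monomial (Finsupp.single i (w j) + w.erase j) 1 : MvPolynomial (Fin m) K) ∈ I := by
  set γ := Matrix.transvection i j (1 : K) with hγdef
  have hγ : ∀ a b, γ a b = (if a = b then (1:K) else 0) + (if a = i ∧ b = j then 1 else 0) := by
    intro a b
    simp [hγdef, Matrix.transvection, Matrix.single, Matrix.one_apply, Matrix.add_apply,
      and_comm, eq_comm]
  have h1 : UpperTriangular γ := by
    intro a b hba
    rw [hγ]
    rw [if_neg (by rintro rfl; exact lt_irrefl _ hba), if_neg ?_, add_zero]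
    rintro ⟨rfl, rfl⟩
    exact absurd (hba.trans hij) (lt_irrefl _)
  have h2 : IsUnit γ.det := by
    rw [hγdef, Matrix.det_transvection_of_ne i j (ne_of_lt hij)]
    exact isUnit_one
  have hφ : ∀ l, (∑ a, C (γ a l) * X a : MvPolynomial (Fin m) K)
      = X l + if l = j then X i else 0 := by
    intro l
    have hterm : ∀ a : Fin m, (C (γ a l) * X a : MvPolynomial (Fin m) K)
        = (if a = l then X a else 0) + (if a = i ∧ l = j then X a else 0) := by
      intro a
      rw [hγ]
      simp only [map_add, apply_ite C, map_one, map_zero, add_mul, ite_mul, one_mul, zero_mul]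
    rw [Finset.sum_congr rfl (fun a _ => hterm a), Finset.sum_add_distrib,
      Finset.sum_ite_eq' Finset.univ l X, if_pos (Finset.mem_univ _)]
    congr 1
    by_cases hl : l = j
    · simp [hl, Finset.sum_ite_eq']
    · simp [hl]
  have key : borelAct γ (monomial w 1)
      = (X i + X j) ^ (w j) * monomial (w.erase j) 1 := by
    have hsplit : (monomial w (1:K) : MvPolynomial (Fin m) K)
        = monomial (Finsupp.single j (w j)) 1 * monomial (w.erase j) 1 := by
      rw [monomial_mul, one_mul, Finsupp.single_add_erase]
    rw [hsplit, map_mul]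
    have hba : ∀ p : MvPolynomial (Fin m) K,
        borelAct γ p = aeval (fun l => ∑ a, C (γ a l) * X a) p := fun _ => rfl
    rw [hba, hba]
    congr 1
    · rw [aeval_monomial, map_one, one_mul,
        Finsupp.prod_single_index (by rw [pow_zero]), hφ j, if_pos rfl, add_comm]
    · rw [aeval_monomial, map_one, one_mul]
      rw [show (monomial (w.erase j) (1:K) : MvPolynomial (Fin m) K)
          = C 1 * (w.erase j).prod fun n e => X n ^ e from monomial_eq, map_one, one_mul]
      apply Finsupp.prod_congr
      intro l hl
      have hlj : l ≠ j := by
        intro h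
        rw [Finsupp.mem_support_iff] at hl
        exact hl (by rw [h, Finsupp.erase_same])
      rw [hφ l, if_neg hlj, add_zero]
  have hmem : borelAct γ (monomial w 1) ∈ I := by
    rw [← hbf γ h1 h2]
    exact Ideal.mem_map_of_mem _ hw
  refine hmon _ hmem _ ?_
  rw [mem_support_iff, key, coeff_mul_monomial, coeff_single_pow (ne_of_lt hij), one_mul]
  exact one_ne_zero

end Aux

section Main

variable {K : Type} [Field K] {m : ℕ}

/-- Monomials of degree `N` in the variables `x_0, …, x_k`. -/
def monSet (k : Fin m) (N : ℕ) : Set (MvPolynomial (Fin m) K) :=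
  {q | ∃ v : Fin m →₀ ℕ, (∀ a ∈ v.support, a ≤ k) ∧ (v.sum fun _ e => e) = N ∧
    q = monomial v 1}

lemma pow_le_span_monSet (k : Fin m) (N : ℕ) :
    (Ideal.span {f : MvPolynomial (Fin m) K | ∃ i ≤ k, f = X i}) ^ N
      ≤ Ideal.span (monSet k N) := by
  induction N with
  | zero =>
    rw [pow_zero, Ideal.one_eq_top, top_le_iff, Ideal.eq_top_iff_one]
    refine Ideal.subset_span ⟨0, by simp, by simp, ?_⟩
    rw [monomial_zero', C_1]
  | succ N ih =>
    rw [pow_succ]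
    refine le_trans (Ideal.mul_mono_left ih) ?_
    rw [Ideal.span_mul_span, Ideal.span_le]
    intro x hx
    simp only [Set.mem_mul] at hx
    obtain ⟨a, ⟨v, hvs, hvd, rfl⟩, b, ⟨i, hik, rfl⟩, rfl⟩ := hx
    refine Ideal.subset_span ⟨v + Finsupp.single i 1, ?_, ?_, ?_⟩
    · intro a ha
      rcases Finset.mem_union.mp (Finsupp.support_add ha) with h | h
      · exact hvs a h
      · have : a = i := by
          by_contra hne
          simp [Finsupp.single_apply, Ne.symm hne] at h
          exact hne h
        exact this ▸ hik
    · rw [Finsupp.sum_add_index' (fun _ => rfl) (fun _ _ _ => rfl), hvd,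
        Finsupp.sum_single_index rfl]
    · rw [show (X i : MvPolynomial (Fin m) K) = monomial (Finsupp.single i 1) 1 from rfl,
        monomial_mul, one_mul]

end Main

/-- For a Borel-fixed monomial ideal `I` over an infinite field,
`(I : ⟨x_0, …, x_k⟩^∞) = (I : x_k^∞)` for all `k`. -/
theorem borelFixed_saturation_eq {K : Type} [Field K] [Infinite K] (n : ℕ)
    (I : Ideal (MvPolynomial (Fin (n + 1)) K))
    (hmon : IsMonomialIdeal I) (hbf : BorelFixed I) (k : Fin (n + 1)) :
    idealSat I (Ideal.span {f : MvPolynomial (Fin (n + 1)) K | ∃ i ≤ k, f = X i}) =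
      idealSat I (Ideal.span {X k}) := by
  apply le_antisymm
  · refine iSup_le fun t => le_trans ?_ (le_iSup _ t)
    refine Submodule.colon_mono le_rfl (Ideal.pow_right_mono ?_ t)
    rw [Ideal.span_le]
    rintro x rfl
    exact Ideal.subset_span ⟨k, le_rfl, rfl⟩
  · refine iSup_le fun t => ?_
    intro f hf
    have hft : f * X k ^ t ∈ I := by
      have h1 := Submodule.mem_colon.mp hf (X k ^ t)
        (by rw [Ideal.span_singleton_pow]; exact Ideal.mem_span_singleton_self _)
      rwa [smul_eq_mul] at h1
    rw [← support_sum_monomial_coeff f]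
    refine Ideal.sum_mem _ fun u hu => ?_
    rw [show (monomial u (coeff u f) : MvPolynomial (Fin (n+1)) K)
        = C (coeff u f) * monomial u 1 by rw [C_mul_monomial, mul_one]]
    refine Ideal.mul_mem_left _ _ ?_
    have hkey : (monomial (u + Finsupp.single k t) 1 : MvPolynomial (Fin (n+1)) K) ∈ I := by
      refine hmon _ hft _ ?_
      rw [mem_support_iff, X_pow_eq_monomial, coeff_mul_monomial, mul_one]
      exact mem_support_iff.mp hu
    set c := u k + t with hc
    refine (le_iSup (fun k' : ℕ => Submodule.colon I
      ((Ideal.span {f : MvPolynomial (Fin (n+1)) K | ∃ i ≤ k, f = X i} ^ k' : Ideal (MvPolynomial (Fin (n+1)) K)) : Set (MvPolynomial (Fin (n+1)) K)))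
      ((n+1) * (c+1)) : _ ≤ idealSat I _) ?_
    rw [Submodule.mem_colon]
    intro p hp
    rw [smul_eq_mul]
    have hp' : p ∈ Ideal.span (monSet k ((n+1) * (c+1))) := pow_le_span_monSet _ _ hp
    clear hp
    induction hp' using Submodule.span_induction with
    | mem q hq =>
      obtain ⟨v, hvs, hvd, rfl⟩ := hq
      rw [monomial_mul, mul_one]
      -- pigeonhole
      have hbig : ∃ a ∈ v.support, c + 1 ≤ v a := by
        by_contra hcon
        push_neg at hcon
        have h2 : (v.sum fun _ e => e) ≤ v.support.card • c :=
          Finset.sum_le_card_nsmul _ _ _ (fun a ha => Nat.lt_succ_iff.mp (hcon a ha))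
        have h3 : v.support.card ≤ n + 1 := by
          simpa using Finset.card_le_univ v.support
        rw [hvd, smul_eq_mul] at h2
        nlinarith [Nat.mul_le_mul_right c h3]
      obtain ⟨a, has, hac⟩ := hbig
      have hak : a ≤ k := hvs a has
      rcases lt_or_eq_of_le hak with halt | haeq
      · -- a < k : use the swap lemma
        have hsw := swap_mem hmon hbf halt hkey
        have hwk : (u + Finsupp.single k t) k = c := by
          simp [hc]
        rw [hwk] at hsw
        refine monomial_mem_of_le ?_ hsw
        rw [Finsupp.le_def]
        intro b
        rcases eq_or_ne b k with rfl | hbk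
        · rw [Finsupp.add_apply, Finsupp.erase_same,
            Finsupp.single_eq_of_ne' (ne_of_lt halt)]
          exact Nat.zero_le _
        · rw [Finsupp.add_apply, Finsupp.erase_ne hbk, Finsupp.add_apply,
            Finsupp.single_eq_of_ne' (fun h : k = b => hbk h.symm), Finsupp.add_apply]
          rcases eq_or_ne a b with rfl | hab
          · rw [Finsupp.single_eq_same]
            omega
          · rw [Finsupp.single_eq_of_ne' hab]
            omega
      · -- a = k
        subst haeq
        refine monomial_mem_of_le ?_ hkey
        rw [Finsupp.le_def]
        intro b
        rcases eq_or_ne b a with rfl | hba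
        · rw [Finsupp.add_apply, Finsupp.single_eq_same, Finsupp.add_apply]
          omega
        · rw [Finsupp.add_apply, Finsupp.single_eq_of_ne' (fun h : a = b => hba h.symm),
            Finsupp.add_apply]
          omega
    | zero => rw [mul_zero]; exact I.zero_mem
    | add x y hx hy ihx ihy => rw [mul_add]; exact I.add_mem ihx ihy
    | smul r x hx ihx => rw [smul_eq_mul, mul_comm r x, ← mul_assoc]; exact I.mul_mem_right _ ihx
end

section
/- Let I ⊂ S = K[x_0, x_1, x_2] be a saturated Borel-fixed monomial ideal over an infinite field with Hilbert polynomial (of S/I) equal to the constant 3. Then I equals either ⟨x_0, x_1^3⟩ or ⟨x_0^2, x_0 x_1, x_1^2⟩. -/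
open MvPolynomial

namespace BFH
variable {K : Type} [Field K]

abbrev S3' (K : Type) [Field K] := MvPolynomial (Fin 3) K

/-! ### Basic `Fin 3` finsupp helpers -/

lemma fin3_cases (l : Fin 3) : l = 0 ∨ l = 1 ∨ l = 2 := by omega

lemma ext3 {u v : Fin 3 →₀ ℕ} (h0 : u 0 = v 0) (h1 : u 1 = v 1) (h2 : u 2 = v 2) : u = v := by
  ext l; rcases fin3_cases l with h|h|h <;> subst h <;> assumption

lemma degree3 (u : Fin 3 →₀ ℕ) : u.degree = u 0 + u 1 + u 2 := by
  rw [Finsupp.degree_apply]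
  rw [Finset.sum_subset (Finset.subset_univ u.support)]
  · simp [Fin.sum_univ_three]
  · intro x _ hx; simpa using Finsupp.notMem_support_iff.mp hx

noncomputable def ex (a b c : ℕ) : Fin 3 →₀ ℕ :=
  Finsupp.single 0 a + Finsupp.single 1 b + Finsupp.single 2 c

@[simp] lemma ex_apply0 (a b c : ℕ) : ex a b c 0 = a := by simp [ex, Finsupp.single_apply]
@[simp] lemma ex_apply1 (a b c : ℕ) : ex a b c 1 = b := by simp [ex, Finsupp.single_apply]
@[simp] lemma ex_apply2 (a b c : ℕ) : ex a b c 2 = c := by simp [ex, Finsupp.single_apply]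

lemma mem_add {I : Ideal (S3' K)} {u : Fin 3 →₀ ℕ} (h : (monomial u 1 : S3' K) ∈ I)
    (w : Fin 3 →₀ ℕ) : (monomial (u + w) 1 : S3' K) ∈ I := by
  have heq : (monomial (u + w) 1 : S3' K) = monomial u 1 * monomial w 1 := by
    rw [monomial_mul, one_mul]
  rw [heq]
  exact Ideal.mul_mem_right _ _ h

lemma mem_mono {I : Ideal (S3' K)} {u v : Fin 3 →₀ ℕ} (h : (monomial u 1 : S3' K) ∈ I)
    (huv : u ≤ v) : (monomial v 1 : S3' K) ∈ I := by
  have heq : v = u + (v - u) := by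
    ext l; have := Finsupp.le_def.mp huv l
    simp only [Finsupp.add_apply, Finsupp.tsub_apply]; omega
  rw [heq]; exact mem_add h _

/-! ### Saturation -/

lemma mul_mem_of_pow {I : Ideal (S3' K)} :
    ∀ (k : ℕ) (x : S3' K), (∀ w : Fin 3 →₀ ℕ, w.degree = k → x * monomial w 1 ∈ I) →
      ∀ p ∈ (irrelevant 3 K) ^ k, x * p ∈ I := by
  intro k
  induction k with
  | zero =>
    intro x h p _
    have hx : x ∈ I := by
      have := h 0 (by simp)
      simpa using this
    exact Ideal.mul_mem_right _ _ hx
  | succ k ih =>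
    intro x h p hp
    rw [pow_succ] at hp
    refine Submodule.mul_induction_on hp ?_ ?_
    · intro r hr s hs
      have hgen : ∀ s ∈ (irrelevant 3 K), x * (r * s) ∈ I := by
        intro s hs
        refine Submodule.span_induction ?_ ?_ ?_ ?_ hs
        · rintro _ ⟨l, rfl⟩
          have hx' : ∀ w : Fin 3 →₀ ℕ, w.degree = k → (x * X l) * monomial w 1 ∈ I := by
            intro w hw
            have heq : (x * X l) * monomial w 1 = x * monomial (w + Finsupp.single l 1) 1 := by
              rw [X, mul_assoc, monomial_mul, one_mul, add_comm]
            rw [heq]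
            apply h
            rw [degree3] at hw ⊢
            simp only [Finsupp.add_apply, Finsupp.single_apply]
            have : (if l = 0 then 1 else 0) + (if l = 1 then 1 else 0) +
                (if l = 2 then 1 else 0) = 1 := by
              rcases (by omega : l = 0 ∨ l = 1 ∨ l = 2) with h|h|h <;> subst h <;> simp
            omega
          have hres := ih (x * X l) hx' r hr
          have heq : x * (r * X l) = (x * X l) * r := by ring
          rw [heq]; exact hres
        · simp
        · intro y z _ _ hy hz
          have heq : x * (r * (y + z)) = x * (r * y) + x * (r * z) := by ring
          rw [heq]
          exact Ideal.add_mem _ hy hz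
        · intro c y _ hy
          have heq : x * (r * (c • y)) = c • (x * (r * y)) := by
            simp [smul_eq_mul]; ring
          rw [heq]
          exact Ideal.mul_mem_left _ _ hy
      exact hgen s hs
    · intro a b ha hb
      rw [mul_add]
      exact Ideal.add_mem _ ha hb

lemma sat_descend {I : Ideal (S3' K)} (hsat : idealSat I (irrelevant 3 K) = I)
    {u : Fin 3 →₀ ℕ} {k : ℕ}
    (h : ∀ w : Fin 3 →₀ ℕ, w.degree = k → (monomial (u + w) 1 : S3' K) ∈ I) :
    (monomial u 1 : S3' K) ∈ I := by
  have hc : (monomial u 1 : S3' K) ∈ Submodule.colon I (((irrelevant 3 K) ^ k : Ideal (S3' K)) : Set (S3' K)) := by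
    rw [Submodule.mem_colon]
    intro p hp
    rw [smul_eq_mul]
    apply mul_mem_of_pow k _ _ p hp
    intro w hw
    rw [monomial_mul, one_mul]
    exact h w hw
  have hle : Submodule.colon I (((irrelevant 3 K) ^ k : Ideal (S3' K)) : Set (S3' K)) ≤ idealSat I (irrelevant 3 K) :=
    le_iSup (fun k => Submodule.colon I (((irrelevant 3 K) ^ k : Ideal (S3' K)) : Set (S3' K))) k
  rw [hsat] at hle
  exact hle hc

/-! ### The Borel exchange move -/

/-- The elementary matrix `1 + E_{ij}`. -/
noncomputable def elem (K : Type) [Field K] (i j : Fin 3) : Matrix (Fin 3) (Fin 3) K :=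
  1 + Matrix.single i j 1

lemma elem_apply (i j a b : Fin 3) :
    elem K i j a b = (if a = b then (1:K) else 0) + (if i = a ∧ j = b then 1 else 0) := by
  simp [elem, Matrix.single, Matrix.one_apply]

lemma elem_upper {i j : Fin 3} (hij : i < j) : UpperTriangular (elem K i j) := by
  intro a b hba
  rw [elem_apply]
  rw [if_neg, if_neg]
  · simp
  · rintro ⟨rfl, rfl⟩; exact absurd hij (not_lt.mpr hba.le)
  · rintro rfl; exact lt_irrefl _ hba

lemma elem_det {i j : Fin 3} (hij : i < j) : IsUnit (elem K i j).det := by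
  have hbt : (elem K i j).BlockTriangular id := by
    intro a b hba
    exact elem_upper hij a b hba
  rw [Matrix.det_of_upperTriangular hbt]
  have hdiag : ∀ a : Fin 3, elem K i j a a = 1 := by
    intro a
    rw [elem_apply, if_pos rfl, if_neg]
    · simp
    · rintro ⟨rfl, rfl⟩; exact lt_irrefl _ hij
  simp [hdiag]

/-- The substitution associated to `elem i j`. -/
noncomputable def sub (K : Type) [Field K] (i j : Fin 3) : Fin 3 → S3' K :=
  fun j' => ∑ i', C (elem K i j i' j') * X i'

lemma sub_ne {i j : Fin 3} (hij : i ≠ j) {j' : Fin 3} (hj' : j' ≠ j) : sub K i j j' = X j' := by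
  rw [sub, Finset.sum_eq_single j']
  · rw [elem_apply, if_pos rfl, if_neg (by rintro ⟨rfl, rfl⟩; exact hj' rfl)]
    simp
  · intro b _ hb
    rw [elem_apply, if_neg hb, if_neg (by rintro ⟨rfl, rfl⟩; exact hj' rfl)]
    simp
  · intro h; exact absurd (Finset.mem_univ j') h

lemma sub_j {i j : Fin 3} (hij : i ≠ j) : sub K i j j = X i + X j := by
  rw [sub]
  have hterm : ∀ i' : Fin 3, C (elem K i j i' j) * X i' =
      (if i' = j then X j else 0) + (if i' = i then X i else 0) := by
    intro i'
    rw [elem_apply]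
    by_cases h1 : i' = j
    · subst h1
      rw [if_pos rfl, if_neg (fun h => hij h.1), if_pos rfl,
        if_neg (fun h => hij h.symm)]
      simp
    · by_cases h2 : i' = i
      · subst h2
        rw [if_neg (fun h => h1 h), if_pos ⟨rfl, rfl⟩, if_neg h1, if_pos rfl]
        simp
      · rw [if_neg (fun h => h1 h), if_neg (fun h => h2 h.1.symm), if_neg h1,
          if_neg h2]
        simp
  rw [Finset.sum_congr rfl (fun i' _ => hterm i')]
  rw [Finset.sum_add_distrib, Finset.sum_ite_eq' Finset.univ j (fun _ => X j),
    Finset.sum_ite_eq' Finset.univ i (fun _ => X i)]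
  simp [add_comm]

lemma aeval_monomial_of_eraseJ {i j : Fin 3} (hij : i ≠ j) {w : Fin 3 →₀ ℕ} (hw : w j = 0) :
    aeval (sub K i j) (monomial w (1:K)) = monomial w 1 := by
  rw [monomial_eq]
  rw [map_mul, aeval_C]
  rw [map_finsuppProd]
  have hcongr : (w.prod fun l e => aeval (sub K i j) ((X l ^ e : S3' K)))
      = w.prod fun l e => (X l ^ e : S3' K) := by
    apply Finsupp.prod_congr
    intro l hl
    have hlj : l ≠ j := fun h => by
      rw [h] at hl; exact absurd hw (Finsupp.mem_support_iff.mp hl)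
    rw [map_pow, aeval_X, sub_ne hij hlj]
  rw [hcongr, MvPolynomial.algebraMap_eq]

lemma exchange {I : Ideal (S3' K)} (hbf : BorelFixed I) (hmon : IsMonomialIdeal I)
    {i j : Fin 3} (hij : i < j) {v : Fin 3 →₀ ℕ} (hv : (monomial v 1 : S3' K) ∈ I)
    {k : ℕ} (hk : k ≤ v j) (hch : ((v j).choose k : K) ≠ 0) :
    (monomial (v + Finsupp.single i k - Finsupp.single j k) 1 : S3' K) ∈ I := by
  have hij' : i ≠ j := ne_of_lt hij
  set c := v j with hc
  set w := v.erase j with hwdef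
  have hw : w j = 0 := Finsupp.erase_same
  have hvw : v = w + Finsupp.single j c := by
    ext l
    by_cases hl : l = j
    · subst hl; simp [hwdef, Finsupp.erase_same, Finsupp.single_apply, hc]
    · simp [hwdef, Finsupp.erase_apply, hl, Finsupp.single_apply, Ne.symm hl]
  have hPI : aeval (sub K i j) (monomial v (1:K)) ∈ I := by
    have hmap := hbf (elem K i j) (elem_upper hij) (elem_det hij)
    have hmem : borelAct (elem K i j) (monomial v 1) ∈ Ideal.map (borelAct (elem K i j)) I :=
      Ideal.mem_map_of_mem _ hv
    rw [hmap] at hmem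
    have hba : borelAct (elem K i j) ((monomial v 1 : S3' K))
        = aeval (sub K i j) (monomial v (1:K)) := rfl
    rw [hba] at hmem
    exact hmem
  have hexp : aeval (sub K i j) (monomial v (1:K)) =
      ∑ k' ∈ Finset.range (c + 1),
        monomial (w + Finsupp.single i k' + Finsupp.single j (c - k')) ((c.choose k' : K)) := by
    have h1 : (monomial v (1:K)) = monomial w 1 * monomial (Finsupp.single j c) 1 := by
      rw [monomial_mul, one_mul, ← hvw]
    conv_lhs => rw [h1]
    rw [map_mul, aeval_monomial_of_eraseJ hij' hw]
    have h2 : (aeval (sub K i j) (monomial (Finsupp.single j c) (1:K)) : S3' K)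
        = (X i + X j) ^ c := by
      rw [← X_pow_eq_monomial, map_pow, aeval_X, sub_j hij']
    rw [h2, add_pow, Finset.mul_sum]
    apply Finset.sum_congr rfl
    intro k' _
    rw [X_pow_eq_monomial, X_pow_eq_monomial, ← map_natCast (C : K →+* S3' K), C_apply,
      monomial_mul, monomial_mul, monomial_mul]
    simp [add_assoc]
  set t := w + Finsupp.single i k + Finsupp.single j (c - k) with ht
  have hco : coeff t (aeval (sub K i j) (monomial v (1:K))) = (c.choose k : K) := by
    rw [hexp, MvPolynomial.coeff_sum]
    rw [Finset.sum_eq_single k]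
    · rw [coeff_monomial, if_pos rfl]
    · intro k' _ hk'
      rw [coeff_monomial, if_neg]
      intro heq
      apply hk'
      have h2 := congrArg (fun u : Fin 3 →₀ ℕ => u i) heq
      simp only [ht, Finsupp.add_apply, Finsupp.single_apply] at h2
      simp [hij', Ne.symm hij'] at h2
      omega
    · intro hk2
      exact absurd (Finset.mem_range.mpr (by omega)) hk2
  have htsupp : t ∈ (aeval (sub K i j) (monomial v (1:K))).support := by
    rw [MvPolynomial.mem_support_iff, hco]
    exact hch
  have hmem := hmon _ hPI t htsupp
  have hteq : t = v + Finsupp.single i k - Finsupp.single j k := by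
    ext l
    simp only [ht, Finsupp.add_apply, Finsupp.tsub_apply, Finsupp.single_apply, hwdef,
      Finsupp.erase_apply]
    by_cases hl : l = j
    · subst hl
      try simp [hij']
      try split_ifs
      all_goals omega
    · try simp [hl, Ne.symm hl]
      try split_ifs
      all_goals omega
  rw [← hteq]
  exact hmem

/-! ### Binomial coefficients that do not vanish in `K` -/

lemma choose_pow_sub_one_ne_zero {p : ℕ} (hp : p.Prime) (m : ℕ) {k : ℕ} (hk : k ≤ p ^ m - 1) :
    ¬ p ∣ (p ^ m - 1).choose k := by
  haveI : Fact p.Prime := ⟨hp⟩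
  have hpm : 1 ≤ p ^ m := Nat.one_le_pow _ _ hp.pos
  have key : ∀ k ≤ p ^ m - 1, ((p ^ m - 1).choose k : ZMod p) = (-1) ^ k := by
    intro k
    induction k with
    | zero => intro _; simp
    | succ k ih =>
      intro hk1
      have hk0 : k ≤ p ^ m - 1 := by omega
      have hpas : (p ^ m).choose (k + 1) = (p ^ m - 1).choose k + (p ^ m - 1).choose (k + 1) := by
        have hps : p ^ m = (p ^ m - 1) + 1 := by omega
        rw [hps, Nat.choose_succ_succ]
        simp
      have hdvd : p ∣ (p ^ m).choose (k + 1) :=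
        Nat.Prime.dvd_choose_pow hp (by omega) (by omega)
      have hz : ((p ^ m).choose (k + 1) : ZMod p) = 0 :=
        (ZMod.natCast_eq_zero_iff _ _).mpr hdvd
      rw [hpas] at hz
      push_cast at hz
      have hih := ih hk0
      have hneg : ((p ^ m - 1).choose (k + 1) : ZMod p) = -(-1) ^ k := by
        rw [hih] at hz
        linear_combination hz
      rw [hneg]
      ring
  intro hdvd
  have hkey := key k hk
  rw [(ZMod.natCast_eq_zero_iff _ _).mpr hdvd] at hkey
  have hne : ((-1 : ZMod p)) ^ k ≠ 0 := by
    apply pow_ne_zero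
    exact neg_ne_zero.mpr one_ne_zero
  exact hne hkey.symm

lemma exists_good (K : Type) [Field K] (n0 : ℕ) :
    ∃ n : ℕ, n0 ≤ n ∧ ∀ k ≤ n, ((n.choose k : K)) ≠ 0 := by
  set p := ringChar K with hp
  haveI hcp : CharP K p := ringChar.charP K
  rcases CharP.char_is_prime_or_zero K p with hpr | hzero
  · have h1 : 1 < p := hpr.one_lt
    have hlt : n0 < p ^ (n0 + 1) := by
      calc n0 < 2 ^ (n0+1) := by
            have := Nat.lt_two_pow_self (n := n0)
            omega
      _ ≤ p ^ (n0+1) := Nat.pow_le_pow_left (by omega) _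
    refine ⟨p ^ (n0 + 1) - 1, by omega, ?_⟩
    intro k hk
    rw [Ne, CharP.cast_eq_zero_iff K p]
    exact choose_pow_sub_one_ne_zero hpr _ hk
  · haveI : CharP K 0 := hzero ▸ hcp
    haveI : CharZero K := CharP.charP_to_charZero K
    refine ⟨n0, le_refl _, ?_⟩
    intro k hk
    exact_mod_cast (Nat.choose_pos hk).ne'

/-! ### Dividing by the last variable -/

lemma descend {I : Ideal (S3' K)} (hbf : BorelFixed I) (hmon : IsMonomialIdeal I)
    (hsat : idealSat I (irrelevant 3 K) = I)
    {u : Fin 3 →₀ ℕ} (h : (monomial (u + Finsupp.single 2 1) 1 : S3' K) ∈ I) :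
    (monomial u 1 : S3' K) ∈ I := by
  obtain ⟨n, hn, hgood⟩ := exists_good K (u 2 + 1)
  set k' := n - u 2 with hk'def
  have hk'1 : 1 ≤ k' := by omega
  have hv : (monomial (u + Finsupp.single 2 k') 1 : S3' K) ∈ I := by
    apply mem_mono h
    rw [Finsupp.le_def]
    intro l
    simp only [Finsupp.add_apply, Finsupp.single_apply]
    split_ifs <;> omega
  have hv2 : (u + Finsupp.single (2 : Fin 3) k') ((2 : Fin 3)) = n := by
    simp [Finsupp.single_apply]
    omega
  have hkn : k' ≤ n := by omega
  have hch : (((u + Finsupp.single (2 : Fin 3) k') ((2 : Fin 3))).choose k' : K) ≠ 0 := by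
    rw [hv2]; exact hgood k' hkn
  have h0 : (monomial (u + Finsupp.single 0 k') 1 : S3' K) ∈ I := by
    have hx := exchange hbf hmon (show (0:Fin 3) < 2 by decide) hv (k := k') (by omega) hch
    have heq : u + Finsupp.single 2 k' + Finsupp.single 0 k' - Finsupp.single 2 k'
        = u + Finsupp.single 0 k' := by
      apply ext3 <;> simp [Finsupp.single_apply]
    rwa [heq] at hx
  have h1 : (monomial (u + Finsupp.single 1 k') 1 : S3' K) ∈ I := by
    have hx := exchange hbf hmon (show (1:Fin 3) < 2 by decide) hv (k := k') (by omega) hch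
    have heq : u + Finsupp.single 2 k' + Finsupp.single 1 k' - Finsupp.single 2 k'
        = u + Finsupp.single 1 k' := by
      apply ext3 <;> simp [Finsupp.single_apply]
    rwa [heq] at hx
  apply sat_descend hsat (k := 2 * k')
  intro w hw
  rw [degree3] at hw
  by_cases hw2 : w 2 = 0
  · rcases le_or_gt k' (w 0) with hcs | hcs
    · apply mem_mono h0
      rw [Finsupp.le_def]; intro l
      rcases fin3_cases l with h'|h'|h' <;> subst h' <;> simp [Finsupp.single_apply] <;> omega
    · have hw1 : k' ≤ w 1 := by omega
      apply mem_mono h1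
      rw [Finsupp.le_def]; intro l
      rcases fin3_cases l with h'|h'|h' <;> subst h' <;> simp [Finsupp.single_apply] <;> omega
  · apply mem_mono h
    rw [Finsupp.le_def]; intro l
    rcases fin3_cases l with h'|h'|h' <;> subst h' <;> simp [Finsupp.single_apply] <;> omega

/-! ### Standard monomials and the Hilbert function -/

noncomputable def Std (I : Ideal (S3' K)) (n : ℕ) : Finset (Fin 3 →₀ ℕ) :=
  @Finset.filter _ (fun u => (monomial u 1 : S3' K) ∉ I) (Classical.decPred _)
    (Finset.finsuppAntidiag Finset.univ n)

lemma mem_Std {I : Ideal (S3' K)} {n : ℕ} {u : Fin 3 →₀ ℕ} :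
    u ∈ Std I n ↔ u.degree = n ∧ (monomial u 1 : S3' K) ∉ I := by
  classical
  unfold Std
  rw [@Finset.mem_filter _ _ (Classical.decPred _), Finset.mem_finsuppAntidiag]
  have hsum : Finset.univ.sum ⇑u = u.degree := by
    rw [degree3, Fin.sum_univ_three]
  constructor
  · rintro ⟨⟨h1, _⟩, h2⟩; exact ⟨by rw [← hsum, h1], h2⟩
  · rintro ⟨h1, h2⟩; exact ⟨⟨by rw [hsum, h1], Finset.subset_univ _⟩, h2⟩

lemma homog_span (n : ℕ) :
    homogeneousSubmodule (Fin 3) K n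
      = Submodule.span K ((fun u => (monomial u 1 : S3' K)) '' {u | u.degree = n}) := by
  rw [homogeneousSubmodule_eq_finsupp_supported, AddMonoidAlgebra.supported_eq_span_single]
  congr 1

lemma hfn_eq_card {I : Ideal (S3' K)} (hmon : IsMonomialIdeal I) (n : ℕ) :
    hfn I n = (Std I n).card := by
  classical
  set mk := (Ideal.Quotient.mkₐ K I).toLinearMap with hmk
  set g : (Fin 3 →₀ ℕ) → (S3' K ⧸ I) := fun u => mk (monomial u 1) with hg
  have h1 : (homogeneousSubmodule (Fin 3) K n).map mk
      = Submodule.span K (g '' {u | u.degree = n}) := by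
    rw [homog_span, Submodule.map_span, ← Set.image_comp]
    rfl
  have hstd : (↑(Std I n) : Set (Fin 3 →₀ ℕ))
      = {u | u.degree = n} ∩ {u | (monomial u 1 : S3' K) ∉ I} := by
    ext u
    simp only [Finset.coe_filter, Set.mem_setOf_eq, Set.mem_inter_iff, Finset.mem_coe, mem_Std]
  have h2 : Submodule.span K (g '' {u | u.degree = n})
      = Submodule.span K (g '' ↑(Std I n)) := by
    apply le_antisymm
    · rw [Submodule.span_le]
      rintro _ ⟨u, hu, rfl⟩
      by_cases hmem : (monomial u 1 : S3' K) ∈ I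
      · have hzero : g u = 0 := by
          simp only [hg, hmk, AlgHom.toLinearMap_apply, Ideal.Quotient.mkₐ_eq_mk]
          exact Ideal.Quotient.eq_zero_iff_mem.mpr hmem
        rw [hzero]
        exact Submodule.zero_mem _
      · apply Submodule.subset_span
        exact ⟨u, by rw [hstd]; exact ⟨hu, hmem⟩, rfl⟩
    · apply Submodule.span_mono
      apply Set.image_mono
      rw [hstd]
      exact Set.inter_subset_left
  have hli : LinearIndependent K (fun x : (↑(Std I n) : Set (Fin 3 →₀ ℕ)) => g x) := by
    rw [linearIndependent_iff']
    intro s gc hsum x hx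
    by_contra hgc
    set f : S3' K := ∑ y ∈ s, monomial (y : Fin 3 →₀ ℕ) (gc y) with hf
    have hfI : f ∈ I := by
      have hmkf : mk f = ∑ y ∈ s, gc y • g y := by
        rw [hf, map_sum]
        apply Finset.sum_congr rfl
        intro y _
        rw [hg]
        have hsm : (monomial (y : Fin 3 →₀ ℕ) (gc y) : S3' K)
            = gc y • monomial (y : Fin 3 →₀ ℕ) 1 := by
          rw [smul_monomial, smul_eq_mul, mul_one]
        rw [hsm, map_smul]
      rw [hsum] at hmkf
      have hq : Ideal.Quotient.mk I f = 0 := by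
        rw [← Ideal.Quotient.mkₐ_eq_mk K I]
        exact hmkf
      exact Ideal.Quotient.eq_zero_iff_mem.mp hq
    have hcoeff : coeff (x : Fin 3 →₀ ℕ) f = gc x := by
      rw [hf, MvPolynomial.coeff_sum]
      rw [Finset.sum_eq_single x]
      · rw [coeff_monomial, if_pos rfl]
      · intro y _ hyx
        rw [coeff_monomial, if_neg]
        intro h
        exact hyx (Subtype.ext h)
      · intro hxs; exact absurd hx hxs
    have hsupp : (x : Fin 3 →₀ ℕ) ∈ f.support := by
      rw [MvPolynomial.mem_support_iff, hcoeff]; exact hgc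
    have hmem := hmon f hfI _ hsupp
    have hxstd := x.2
    rw [Finset.mem_coe, mem_Std] at hxstd
    exact hxstd.2 hmem
  have hinj : Set.InjOn g ↑(Std I n) := by
    intro u hu v hv huv
    by_contra hne
    rw [Finset.mem_coe, mem_Std] at hu hv
    have hdiff : (monomial u 1 - monomial v 1 : S3' K) ∈ I := by
      have hz : mk (monomial u 1 - monomial v 1) = 0 := by
        rw [map_sub]
        rw [sub_eq_zero]
        exact huv
      rw [hmk, AlgHom.toLinearMap_apply, Ideal.Quotient.mkₐ_eq_mk] at hz
      exact Ideal.Quotient.eq_zero_iff_mem.mp hz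
    have hsupp : u ∈ (monomial u 1 - monomial v 1 : S3' K).support := by
      rw [MvPolynomial.mem_support_iff, MvPolynomial.coeff_sub, coeff_monomial, if_pos rfl,
        coeff_monomial, if_neg (fun h => hne h.symm)]
      simp
    exact hu.2 (hmon _ hdiff _ hsupp)
  have hli2 : LinearIndependent K (fun x : (g '' ↑(Std I n)) => (x : S3' K ⧸ I)) :=
    (linearIndepOn_iff_image hinj).mp hli
  rw [hfn, h1, h2]
  rw [finrank_span_set_eq_card hli2, Set.toFinset_image, Finset.toFinset_coe,
    Finset.card_image_of_injOn (fun a ha b hb hab => hinj ha hb hab)]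

/-! ### The plane staircase -/

lemma plane_descend {I : Ideal (S3' K)} (hbf : BorelFixed I) (hmon : IsMonomialIdeal I)
    (hsat : idealSat I (irrelevant 3 K) = I)
    {u : Fin 3 →₀ ℕ} (h : (monomial u 1 : S3' K) ∈ I) :
    (monomial (ex (u 0) (u 1) 0) 1 : S3' K) ∈ I := by
  suffices H : ∀ c a b, (monomial (ex a b c) 1 : S3' K) ∈ I →
      (monomial (ex a b 0) 1 : S3' K) ∈ I by
    have hu : u = ex (u 0) (u 1) (u 2) := ext3 (by simp) (by simp) (by simp)
    exact H (u 2) (u 0) (u 1) (by rwa [← hu])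
  intro c
  induction c with
  | zero => exact fun a b h => h
  | succ c ih =>
    intro a b h
    apply ih
    apply descend hbf hmon hsat
    have heq : ex a b c + Finsupp.single 2 1 = ex a b (c + 1) := by
      apply ext3 <;> simp [Finsupp.single_apply]
    rwa [heq]

lemma plane_ascend {I : Ideal (S3' K)} {a b : ℕ}
    (h : (monomial (ex a b 0) 1 : S3' K) ∈ I) (c : ℕ) :
    (monomial (ex a b c) 1 : S3' K) ∈ I := by
  have heq : ex a b 0 + Finsupp.single 2 c = ex a b c := by
    apply ext3 <;> simp [Finsupp.single_apply]
  rw [← heq]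
  exact mem_add h _

/-- The plane staircase at level `n`. -/
noncomputable def Bn (I : Ideal (S3' K)) (n : ℕ) : Finset (ℕ × ℕ) :=
  @Finset.filter _ (fun p => p.1 + p.2 ≤ n ∧ (monomial (ex p.1 p.2 0) 1 : S3' K) ∉ I)
    (Classical.decPred _) (Finset.range (n+1) ×ˢ Finset.range (n+1))

lemma mem_Bn {I : Ideal (S3' K)} {n : ℕ} {p : ℕ × ℕ} :
    p ∈ Bn I n ↔ p.1 + p.2 ≤ n ∧ (monomial (ex p.1 p.2 0) 1 : S3' K) ∉ I := by
  unfold Bn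
  rw [@Finset.mem_filter _ _ (Classical.decPred _)]
  constructor
  · rintro ⟨-, h⟩; exact h
  · rintro ⟨h1, h2⟩
    exact ⟨Finset.mem_product.mpr ⟨Finset.mem_range.mpr (by omega),
      Finset.mem_range.mpr (by omega)⟩, h1, h2⟩

lemma card_Bn {I : Ideal (S3' K)} (hbf : BorelFixed I) (hmon : IsMonomialIdeal I)
    (hsat : idealSat I (irrelevant 3 K) = I) (n : ℕ) :
    (Bn I n).card = (Std I n).card := by
  apply Finset.card_bij' (fun p _ => ex p.1 p.2 (n - p.1 - p.2)) (fun u _ => (u 0, u 1))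
  · intro p hp
    rw [mem_Bn] at hp
    rw [mem_Std]
    constructor
    · rw [degree3]; simp; omega
    · intro hmem
      exact hp.2 (by simpa using plane_descend hbf hmon hsat hmem)
  · intro u hu
    rw [mem_Std] at hu
    rw [mem_Bn]
    have hdeg := hu.1
    rw [degree3] at hdeg
    refine ⟨by omega, ?_⟩
    intro hmem
    apply hu.2
    have hasc := plane_ascend hmem (u 2)
    have heq : ex (u 0) (u 1) (u 2) = u := ext3 (by simp) (by simp) (by simp)
    rwa [heq] at hasc
  · intro p hp
    rw [mem_Bn] at hp
    simp
  · intro u hu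
    rw [mem_Std] at hu
    have hdeg := hu.1
    rw [degree3] at hdeg
    apply ext3 <;> simp <;> omega

/-! ### Stabilization and classification of the staircase -/

lemma Bn_mono {I : Ideal (S3' K)} {n m : ℕ} (h : n ≤ m) : Bn I n ⊆ Bn I m := by
  intro p hp
  rw [mem_Bn] at hp ⊢
  exact ⟨hp.1.trans h, hp.2⟩

lemma Bn_stable {I : Ideal (S3' K)} {N : ℕ} (hcard : ∀ n, N ≤ n → (Bn I n).card = 3)
    {m : ℕ} (hm : N ≤ m) : Bn I m = Bn I N :=
  (Finset.eq_of_subset_of_card_le (Bn_mono hm)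
    (by rw [hcard m hm, hcard N le_rfl])).symm

lemma mem_D_iff {I : Ideal (S3' K)} {N : ℕ} (hcard : ∀ n, N ≤ n → (Bn I n).card = 3)
    (a b : ℕ) :
    (a, b) ∈ Bn I N ↔ (monomial (ex a b 0) 1 : S3' K) ∉ I := by
  constructor
  · intro h; exact (mem_Bn.mp h).2
  · intro h
    have hm : (a, b) ∈ Bn I (N + a + b) := mem_Bn.mpr ⟨by omega, h⟩
    rwa [Bn_stable hcard (by omega)] at hm

lemma D_down {I : Ideal (S3' K)} {N : ℕ} (hcard : ∀ n, N ≤ n → (Bn I n).card = 3)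
    {a b a' b' : ℕ}
    (ha : a' ≤ a) (hb : b' ≤ b) (h : (a, b) ∈ Bn I N) : (a', b') ∈ Bn I N := by
  rw [mem_D_iff hcard] at h ⊢
  intro hmem
  apply h
  apply mem_mono hmem
  rw [Finsupp.le_def]
  intro l
  rcases fin3_cases l with hl|hl|hl <;> subst hl <;> simp <;> omega

lemma D_classify {I : Ideal (S3' K)} {N : ℕ} (hcard : ∀ n, N ≤ n → (Bn I n).card = 3) :
    Bn I N = {(0,0),(0,1),(0,2)} ∨ Bn I N = {(0,0),(0,1),(1,0)} ∨
      Bn I N = {(0,0),(1,0),(2,0)} := by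
  have hD3 : (Bn I N).card = 3 := hcard N le_rfl
  have h00 : ((0,0) : ℕ × ℕ) ∈ Bn I N := by
    have hne : (Bn I N).Nonempty := Finset.card_pos.mp (by omega)
    obtain ⟨⟨a, b⟩, hab⟩ := hne
    exact D_down hcard (Nat.zero_le _) (Nat.zero_le _) hab
  by_cases h10 : ((1,0) : ℕ × ℕ) ∈ Bn I N <;> by_cases h01 : ((0,1) : ℕ × ℕ) ∈ Bn I N
  · right; left
    have hsub : ({(0,0),(0,1),(1,0)} : Finset (ℕ × ℕ)) ⊆ Bn I N := by
      intro p hp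
      simp only [Finset.mem_insert, Finset.mem_singleton] at hp
      rcases hp with rfl|rfl|rfl <;> assumption
    exact (Finset.eq_of_subset_of_card_le hsub (by rw [hD3]; decide)).symm
  · right; right
    have hb0 : ∀ p ∈ Bn I N, p.2 = 0 := by
      intro p hp
      by_contra hb
      exact h01 (D_down hcard (Nat.zero_le _) (by omega) hp)
    have h20 : ((2,0) : ℕ × ℕ) ∈ Bn I N := by
      by_contra h20
      have hsub : Bn I N ⊆ {(0,0),(1,0)} := by
        intro p hp
        have hb := hb0 p hp
        have ha : p.1 ≤ 1 := by
          by_contra ha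
          exact h20 (D_down hcard (show 2 ≤ p.1 by omega) (Nat.zero_le _) hp)
        simp only [Finset.mem_insert, Finset.mem_singleton]
        rcases p with ⟨a, b⟩
        simp only at hb ha
        interval_cases a
        · left; rw [hb]
        · right; rw [hb]
      have hle := Finset.card_le_card hsub
      have h2 : ({(0,0),(1,0)} : Finset (ℕ × ℕ)).card = 2 := by decide
      omega
    have hsub : ({(0,0),(1,0),(2,0)} : Finset (ℕ × ℕ)) ⊆ Bn I N := by
      intro p hp
      simp only [Finset.mem_insert, Finset.mem_singleton] at hp
      rcases hp with rfl|rfl|rfl <;> assumption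
    exact (Finset.eq_of_subset_of_card_le hsub (by rw [hD3]; decide)).symm
  · left
    have ha0 : ∀ p ∈ Bn I N, p.1 = 0 := by
      intro p hp
      by_contra ha
      exact h10 (D_down hcard (by omega) (Nat.zero_le _) hp)
    have h02 : ((0,2) : ℕ × ℕ) ∈ Bn I N := by
      by_contra h02
      have hsub : Bn I N ⊆ {(0,0),(0,1)} := by
        intro p hp
        have ha := ha0 p hp
        have hb : p.2 ≤ 1 := by
          by_contra hb
          exact h02 (D_down hcard (Nat.zero_le _) (show 2 ≤ p.2 by omega) hp)
        simp only [Finset.mem_insert, Finset.mem_singleton]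
        rcases p with ⟨a, b⟩
        simp only at ha hb
        interval_cases b
        · left; rw [ha]
        · right; rw [ha]
      have hle := Finset.card_le_card hsub
      have h2 : ({(0,0),(0,1)} : Finset (ℕ × ℕ)).card = 2 := by decide
      omega
    have hsub : ({(0,0),(0,1),(0,2)} : Finset (ℕ × ℕ)) ⊆ Bn I N := by
      intro p hp
      simp only [Finset.mem_insert, Finset.mem_singleton] at hp
      rcases hp with rfl|rfl|rfl <;> assumption
    exact (Finset.eq_of_subset_of_card_le hsub (by rw [hD3]; decide)).symm
  · exfalso
    have hsub : Bn I N ⊆ {(0,0)} := by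
      intro p hp
      have ha : p.1 = 0 := by
        by_contra ha
        exact h10 (D_down hcard (by omega) (Nat.zero_le _) hp)
      have hb : p.2 = 0 := by
        by_contra hb
        exact h01 (D_down hcard (Nat.zero_le _) (by omega) hp)
      simp only [Finset.mem_singleton]
      rcases p with ⟨a, b⟩
      simp only at ha hb
      rw [ha, hb]
    have hle := Finset.card_le_card hsub
    have h1 : ({(0,0)} : Finset (ℕ × ℕ)).card = 1 := by decide
    omega

lemma not_case3 {I : Ideal (S3' K)} {N : ℕ} (hbf : BorelFixed I) (hmon : IsMonomialIdeal I)
    (hcard : ∀ n, N ≤ n → (Bn I n).card = 3)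
    (hD : Bn I N = {(0,0),(1,0),(2,0)}) : False := by
  have h01 : (monomial (ex 0 1 0) 1 : S3' K) ∈ I := by
    have hnm : ((0,1) : ℕ × ℕ) ∉ Bn I N := by rw [hD]; decide
    rw [mem_D_iff hcard] at hnm
    exact not_not.mp hnm
  have h10 : (monomial (ex 1 0 0) 1 : S3' K) ∉ I := by
    have hm : ((1,0) : ℕ × ℕ) ∈ Bn I N := by rw [hD]; decide
    exact (mem_D_iff hcard 1 0).mp hm
  apply h10
  have hv1 : (ex 0 1 0) 1 = 1 := by simp
  have hx := exchange hbf hmon (I := I) (show (0 : Fin 3) < 1 by decide) h01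
    (k := 1) (by rw [hv1]) (by rw [hv1]; simpa using one_ne_zero)
  have heq : ex 0 1 0 + Finsupp.single 0 1 - Finsupp.single 1 1 = ex 1 0 0 := by
    apply ext3 <;> simp [Finsupp.single_apply]
  rwa [heq] at hx

/-! ### Membership characterizations and ideal identification -/

lemma mem_char1 {I : Ideal (S3' K)} {N : ℕ} (hbf : BorelFixed I) (hmon : IsMonomialIdeal I)
    (hsat : idealSat I (irrelevant 3 K) = I)
    (hcard : ∀ n, N ≤ n → (Bn I n).card = 3)
    (hD : Bn I N = {(0,0),(0,1),(0,2)}) (u : Fin 3 →₀ ℕ) :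
    (monomial u 1 : S3' K) ∈ I ↔ (1 ≤ u 0 ∨ 3 ≤ u 1) := by
  constructor
  · intro h
    by_contra hcon
    push_neg at hcon
    have hmemD : (u 0, u 1) ∈ Bn I N := by
      rw [hD]
      simp only [Finset.mem_insert, Finset.mem_singleton, Prod.mk.injEq]
      omega
    exact (mem_D_iff hcard _ _).mp hmemD (plane_descend hbf hmon hsat h)
  · intro h
    rcases h with h|h
    · have h10 : (monomial (ex 1 0 0) 1 : S3' K) ∈ I := by
        have hnm : ((1,0) : ℕ × ℕ) ∉ Bn I N := by rw [hD]; decide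
        rw [mem_D_iff hcard] at hnm
        exact not_not.mp hnm
      apply mem_mono h10
      rw [Finsupp.le_def]
      intro l
      rcases fin3_cases l with hl|hl|hl <;> subst hl <;> simp <;> omega
    · have h03 : (monomial (ex 0 3 0) 1 : S3' K) ∈ I := by
        have hnm : ((0,3) : ℕ × ℕ) ∉ Bn I N := by rw [hD]; decide
        rw [mem_D_iff hcard] at hnm
        exact not_not.mp hnm
      apply mem_mono h03
      rw [Finsupp.le_def]
      intro l
      rcases fin3_cases l with hl|hl|hl <;> subst hl <;> simp <;> omega

lemma mem_char2 {I : Ideal (S3' K)} {N : ℕ} (hbf : BorelFixed I) (hmon : IsMonomialIdeal I)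
    (hsat : idealSat I (irrelevant 3 K) = I)
    (hcard : ∀ n, N ≤ n → (Bn I n).card = 3)
    (hD : Bn I N = {(0,0),(0,1),(1,0)}) (u : Fin 3 →₀ ℕ) :
    (monomial u 1 : S3' K) ∈ I ↔ 2 ≤ u 0 + u 1 := by
  constructor
  · intro h
    by_contra hcon
    push_neg at hcon
    have hmemD : (u 0, u 1) ∈ Bn I N := by
      rw [hD]
      simp only [Finset.mem_insert, Finset.mem_singleton, Prod.mk.injEq]
      omega
    exact (mem_D_iff hcard _ _).mp hmemD (plane_descend hbf hmon hsat h)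
  · intro h
    have key : ∀ a b : ℕ, ((a,b) : ℕ × ℕ) ∉ Bn I N → a ≤ u 0 → b ≤ u 1 →
        (monomial u 1 : S3' K) ∈ I := by
      intro a b hab ha hb
      rw [mem_D_iff hcard] at hab
      apply mem_mono (not_not.mp hab)
      rw [Finsupp.le_def]
      intro l
      rcases fin3_cases l with hl|hl|hl <;> subst hl <;> simp <;> omega
    rcases le_or_gt 2 (u 0) with h2|h2
    · exact key 2 0 (by rw [hD]; decide) h2 (Nat.zero_le _)
    · rcases le_or_gt 2 (u 1) with h3|h3
      · exact key 0 2 (by rw [hD]; decide) (Nat.zero_le _) h3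
      · exact key 1 1 (by rw [hD]; decide) (by omega) (by omega)

lemma eq_J1 {I : Ideal (S3' K)} (hmon : IsMonomialIdeal I)
    (hchar : ∀ u : Fin 3 →₀ ℕ, (monomial u 1 : S3' K) ∈ I ↔ (1 ≤ u 0 ∨ 3 ≤ u 1)) :
    I = Ideal.span {(X 0 : S3' K), X 1 ^ 3} := by
  have hX0 : (X 0 : S3' K) = monomial (Finsupp.single 0 1) 1 := rfl
  have hX13 : (X 1 ^ 3 : S3' K) = monomial (Finsupp.single 1 3) 1 := X_pow_eq_monomial
  apply le_antisymm
  · intro f hf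
    rw [← support_sum_monomial_coeff f]
    apply Ideal.sum_mem
    intro u hu
    rcases (hchar u).mp (hmon f hf u hu) with h|h
    · have heq : (monomial u (coeff u f) : S3' K)
          = monomial (u - Finsupp.single 0 1) (coeff u f) * X 0 := by
        rw [hX0, monomial_mul, mul_one]
        exact congrArg (fun w => (monomial w (coeff u f) : S3' K))
          (ext3 (by simp [Finsupp.single_apply] <;> omega)
            (by simp [Finsupp.single_apply] <;> omega)
            (by simp [Finsupp.single_apply] <;> omega)).symm
      rw [heq]
      exact Ideal.mul_mem_left _ _ (Ideal.subset_span (by simp))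
    · have heq : (monomial u (coeff u f) : S3' K)
          = monomial (u - Finsupp.single 1 3) (coeff u f) * X 1 ^ 3 := by
        rw [hX13, monomial_mul, mul_one]
        exact congrArg (fun w => (monomial w (coeff u f) : S3' K))
          (ext3 (by simp [Finsupp.single_apply] <;> omega)
            (by simp [Finsupp.single_apply] <;> omega)
            (by simp [Finsupp.single_apply] <;> omega)).symm
      rw [heq]
      exact Ideal.mul_mem_left _ _ (Ideal.subset_span (by simp))
  · rw [Ideal.span_le]
    rintro g hg
    simp only [Set.mem_insert_iff, Set.mem_singleton_iff] at hg
    rcases hg with rfl|rfl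
    · show (X 0 : S3' K) ∈ I
      rw [hX0]
      exact (hchar _).mpr (Or.inl (by simp))
    · show (X 1 ^ 3 : S3' K) ∈ I
      rw [hX13]
      exact (hchar _).mpr (Or.inr (by simp))

lemma eq_J2 {I : Ideal (S3' K)} (hmon : IsMonomialIdeal I)
    (hchar : ∀ u : Fin 3 →₀ ℕ, (monomial u 1 : S3' K) ∈ I ↔ 2 ≤ u 0 + u 1) :
    I = Ideal.span {(X 0 ^ 2 : S3' K), X 0 * X 1, X 1 ^ 2} := by
  have hA : (X 0 ^ 2 : S3' K) = monomial (Finsupp.single 0 2) 1 := X_pow_eq_monomial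
  have hB : (X 0 * X 1 : S3' K) = monomial (Finsupp.single 0 1 + Finsupp.single 1 1) 1 := by
    rw [show (X 0 : S3' K) = monomial (Finsupp.single 0 1) 1 from rfl,
      show (X 1 : S3' K) = monomial (Finsupp.single 1 1) 1 from rfl, monomial_mul, one_mul]
  have hC : (X 1 ^ 2 : S3' K) = monomial (Finsupp.single 1 2) 1 := X_pow_eq_monomial
  apply le_antisymm
  · intro f hf
    rw [← support_sum_monomial_coeff f]
    apply Ideal.sum_mem
    intro u hu
    have hm := (hchar u).mp (hmon f hf u hu)
    rcases le_or_gt 2 (u 0) with h|h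
    · have heq : (monomial u (coeff u f) : S3' K)
          = monomial (u - Finsupp.single 0 2) (coeff u f) * X 0 ^ 2 := by
        rw [hA, monomial_mul, mul_one]
        exact congrArg (fun w => (monomial w (coeff u f) : S3' K))
          (ext3 (by simp [Finsupp.single_apply] <;> omega)
            (by simp [Finsupp.single_apply] <;> omega)
            (by simp [Finsupp.single_apply] <;> omega)).symm
      rw [heq]
      exact Ideal.mul_mem_left _ _ (Ideal.subset_span (by simp))
    · rcases le_or_gt 2 (u 1) with h2|h2
      · have heq : (monomial u (coeff u f) : S3' K)
            = monomial (u - Finsupp.single 1 2) (coeff u f) * X 1 ^ 2 := by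
          rw [hC, monomial_mul, mul_one]
          exact congrArg (fun w => (monomial w (coeff u f) : S3' K))
            (ext3 (by simp [Finsupp.single_apply] <;> omega)
              (by simp [Finsupp.single_apply] <;> omega)
              (by simp [Finsupp.single_apply] <;> omega)).symm
        rw [heq]
        exact Ideal.mul_mem_left _ _ (Ideal.subset_span (by simp))
      · have h01 : 1 ≤ u 0 ∧ 1 ≤ u 1 := by omega
        have heq : (monomial u (coeff u f) : S3' K)
            = monomial (u - (Finsupp.single 0 1 + Finsupp.single 1 1)) (coeff u f)
              * (X 0 * X 1) := by
          rw [hB, monomial_mul, mul_one]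
          exact congrArg (fun w => (monomial w (coeff u f) : S3' K))
            (ext3 (by simp [Finsupp.single_apply] <;> omega)
              (by simp [Finsupp.single_apply] <;> omega)
              (by simp [Finsupp.single_apply] <;> omega)).symm
        rw [heq]
        exact Ideal.mul_mem_left _ _ (Ideal.subset_span (by simp))
  · rw [Ideal.span_le]
    rintro g hg
    simp only [Set.mem_insert_iff, Set.mem_singleton_iff] at hg
    rcases hg with rfl|rfl|rfl
    · show (X 0 ^ 2 : S3' K) ∈ I
      rw [hA]
      exact (hchar _).mpr (by simp)
    · show (X 0 * X 1 : S3' K) ∈ I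
      rw [hB]
      exact (hchar _).mpr (by simp [Finsupp.single_apply])
    · show (X 1 ^ 2 : S3' K) ∈ I
      rw [hC]
      exact (hchar _).mpr (by simp)

end BFH

/-- A saturated Borel-fixed monomial ideal in `K[x_0, x_1, x_2]` over an infinite field,
with Hilbert polynomial of the quotient the constant `3`, is `⟨x_0, x_1^3⟩` or
`⟨x_0^2, x_0 x_1, x_1^2⟩`. -/
theorem borelFixed_hilbPoly_three {K : Type} [Field K] [Infinite K]
    (I : Ideal (MvPolynomial (Fin 3) K))
    (hmon : IsMonomialIdeal I) (hbf : BorelFixed I)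
    (hsat : idealSat I (irrelevant 3 K) = I)
    (hhp : ∃ N : ℕ, ∀ i ≥ N, hfn I i = 3) :
    I = Ideal.span {(X 0 : MvPolynomial (Fin 3) K), X 1 ^ 3} ∨
    I = Ideal.span {(X 0 ^ 2 : MvPolynomial (Fin 3) K), X 0 * X 1, X 1 ^ 2} := by
  obtain ⟨N, hN⟩ := hhp
  have hcard : ∀ n, N ≤ n → (BFH.Bn I n).card = 3 := by
    intro n hn
    rw [BFH.card_Bn hbf hmon hsat, ← BFH.hfn_eq_card hmon]
    exact hN n hn
  rcases BFH.D_classify hcard with hD | hD | hD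
  · left
    exact BFH.eq_J1 hmon (BFH.mem_char1 hbf hmon hsat hcard hD)
  · right
    exact BFH.eq_J2 hmon (BFH.mem_char2 hbf hmon hsat hcard hD)
  · exact (BFH.not_case3 hbf hmon hcard hD).elim
end

section
/- Let I ⊂ S = K[x_0, x_1, x_2] be a saturated Borel-fixed monomial ideal over an infinite field K of characteristic ≠ 2, with Hilbert polynomial of S/I equal to the constant 4. Then I equals either ⟨x_0, x_1^4⟩ or ⟨x_0^2, x_0 x_1, x_1^3⟩. -/
open MvPolynomial

/-! ### helpers -/


noncomputable def fs3 (a b c : ℕ) : Fin 3 →₀ ℕ :=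
  Finsupp.single 0 a + Finsupp.single 1 b + Finsupp.single 2 c

@[simp] lemma fs3_apply0 (a b c : ℕ) : fs3 a b c 0 = a := by
  simp [fs3, Finsupp.single_apply]

@[simp] lemma fs3_apply1 (a b c : ℕ) : fs3 a b c 1 = b := by
  simp [fs3, Finsupp.single_apply]

@[simp] lemma fs3_apply2 (a b c : ℕ) : fs3 a b c 2 = c := by
  simp [fs3, Finsupp.single_apply]

lemma fs3_self (u : Fin 3 →₀ ℕ) : fs3 (u 0) (u 1) (u 2) = u := by
  ext l
  fin_cases l <;> simp

lemma mono_mem_add {K : Type} [Field K] {I : Ideal (MvPolynomial (Fin 3) K)}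
    {u : Fin 3 →₀ ℕ} (h : (monomial u 1 : MvPolynomial (Fin 3) K) ∈ I) (v : Fin 3 →₀ ℕ) :
    (monomial (u + v) 1 : MvPolynomial (Fin 3) K) ∈ I := by
  have : (monomial (u + v) 1 : MvPolynomial (Fin 3) K) = monomial u 1 * monomial v 1 := by
    rw [monomial_mul, one_mul]
  rw [this]
  exact I.mul_mem_right _ h

lemma borel_swap {K : Type} [Field K] {I : Ideal (MvPolynomial (Fin 3) K)}
    (hmon : IsMonomialIdeal I) (hbf : BorelFixed I)
    {i j : Fin 3} (hij : i < j) {u : Fin 3 →₀ ℕ} (hu : (monomial u 1 : MvPolynomial (Fin 3) K) ∈ I)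
    {k : ℕ} (hk : k ≤ u j) (hco : ((u j).choose k : K) ≠ 0) :
    (monomial (u + Finsupp.single i k - Finsupp.single j k) 1 : MvPolynomial (Fin 3) K) ∈ I := by
  classical
  have hne : i ≠ j := ne_of_lt hij
  set γ : Matrix (Fin 3) (Fin 3) K :=
    Matrix.of fun a b => if a = b then 1 else if a = i ∧ b = j then 1 else 0 with hγ
  have hUT : ∀ a b : Fin 3, b < a → γ a b = 0 := by
    intro a b hba
    simp only [hγ, Matrix.of_apply]
    rw [if_neg (fun h => absurd h (ne_of_gt hba)), if_neg]
    rintro ⟨rfl, rfl⟩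
    exact absurd hij (not_lt_of_gt hba)
  have hdet : IsUnit γ.det := by
    have h1 : γ.det = ∏ a, γ a a :=
      Matrix.det_of_upperTriangular (by intro a b h; exact hUT a b h)
    have h2 : ∀ a, γ a a = 1 := fun a => by simp [hγ]
    rw [h1]
    simp only [h2, Finset.prod_const_one]
    exact isUnit_one
  have hmap : Ideal.map ((aeval (fun l => ∑ a, C (γ a l) * X a)).toRingHom :
      MvPolynomial (Fin 3) K →+* MvPolynomial (Fin 3) K) I = I := hbf γ hUT hdet
  set n := u j with hn
  set F : Fin 3 → MvPolynomial (Fin 3) K := fun l => ∑ a, C (γ a l) * X a with hF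
  have hFj : F j = X i + X j := by
    have h1 : ∀ a : Fin 3, C (γ a j) * X a
        = (if a = i then X i else 0) + (if a = j then X j else 0) := by
      intro a
      by_cases hai : a = i
      · subst hai
        rw [if_pos rfl, if_neg hne]
        have : γ a j = 1 := by simp [hγ, hne]
        rw [this]; simp
      · by_cases haj : a = j
        · subst haj
          rw [if_neg hai, if_pos rfl]
          have : γ a a = 1 := by simp [hγ]
          rw [this]; simp
        · rw [if_neg hai, if_neg haj]
          have : γ a j = 0 := by simp [hγ, haj, hai]
          rw [this]; simp
    rw [hF]
    calc (∑ a, C (γ a j) * X a)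
        = ∑ a : Fin 3, ((if a = i then X i else 0) + (if a = j then X j else 0)) :=
          Finset.sum_congr rfl (fun a _ => h1 a)
      _ = X i + X j := by
          rw [Finset.sum_add_distrib, Finset.sum_ite_eq' Finset.univ i,
            Finset.sum_ite_eq' Finset.univ j]
          simp
  have hFl : ∀ l, l ≠ j → F l = X l := by
    intro l hl
    have h1 : ∀ a : Fin 3, C (γ a l) * X a = (if a = l then X l else 0) := by
      intro a
      by_cases hal : a = l
      · subst hal
        rw [if_pos rfl]
        have : γ a a = 1 := by simp [hγ]
        rw [this]; simp
      · rw [if_neg hal]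
        have : γ a l = 0 := by
          simp only [hγ, Matrix.of_apply, if_neg hal]
          rw [if_neg]
          rintro ⟨rfl, rfl⟩
          exact hl rfl
        rw [this]; simp
    calc F l = ∑ a : Fin 3, (if a = l then X l else 0) :=
          Finset.sum_congr rfl (fun a _ => h1 a)
      _ = X l := by rw [Finset.sum_ite_eq' Finset.univ l]; simp
  set w : ℕ → (Fin 3 →₀ ℕ) := fun k => u + Finsupp.single i k - Finsupp.single j k with hw
  set R : MvPolynomial (Fin 3) K := ∏ l ∈ Finset.univ.erase j, X l ^ u l with hR
  have hprodmono : ∀ (s : Finset (Fin 3)),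
      (∏ l ∈ s, (X l ^ u l : MvPolynomial (Fin 3) K))
        = monomial (∑ l ∈ s, Finsupp.single l (u l)) 1 := by
    intro s
    induction s using Finset.induction with
    | empty => simp
    | insert _ _ h ih =>
        rw [Finset.prod_insert h, Finset.sum_insert h, ih, X_pow_eq_monomial, monomial_mul,
          one_mul]
  have hsum_apply : ∀ t : Fin 3,
      (∑ l ∈ Finset.univ.erase j, Finsupp.single l (u l)) t = if t = j then 0 else u t := by
    intro t
    rw [Finsupp.finset_sum_apply]
    have : ∀ l ∈ Finset.univ.erase j, Finsupp.single l (u l) t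
        = if l = t then u l else 0 := fun l _ => Finsupp.single_apply
    rw [Finset.sum_congr rfl this, Finset.sum_ite_eq' _ t]
    by_cases htj : t = j
    · simp [htj]
    · simp [htj]
  have hexp : ∀ k' ≤ n,
      Finsupp.single i k' + Finsupp.single j (n - k')
          + ∑ l ∈ Finset.univ.erase j, Finsupp.single l (u l) = w k' := by
    intro k' hk'
    ext t
    rw [Finsupp.add_apply, Finsupp.add_apply, hsum_apply t, hw]
    simp only [Finsupp.tsub_apply, Finsupp.add_apply, Finsupp.single_apply]
    by_cases htj : t = j
    · subst htj
      rw [if_pos rfl, if_neg (fun h : i = t => hne h), if_pos rfl]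
      simp [← hn]
    · rw [if_neg htj, if_neg (fun h : j = t => htj h.symm),
        if_neg (fun h : j = t => htj h.symm)]
      by_cases hti : i = t <;> simp [hti] <;> omega
  have hwj : ∀ m : ℕ, w m j = n - m := by
    intro m
    rw [hw]
    simp only [Finsupp.tsub_apply, Finsupp.add_apply, Finsupp.single_apply,
      if_neg hne, if_pos rfl, add_zero, ← hn]
    simp
  have hterm : ∀ k' ∈ Finset.range (n + 1),
      X i ^ k' * X j ^ (n - k') * ((n.choose k' : ℕ) : MvPolynomial (Fin 3) K) * R
        = monomial (w k') ((n.choose k' : ℕ) : K) := by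
    intro k' hk'
    have hk'' : k' ≤ n := Nat.lt_succ_iff.1 (Finset.mem_range.1 hk')
    have hXX : X i ^ k' * X j ^ (n - k') * R = monomial (w k') (1 : K) := by
      rw [hR, hprodmono, X_pow_eq_monomial, X_pow_eq_monomial, monomial_mul, monomial_mul,
        one_mul, one_mul, hexp k' hk'']
    calc X i ^ k' * X j ^ (n - k') * ((n.choose k' : ℕ) : MvPolynomial (Fin 3) K) * R
        = X i ^ k' * X j ^ (n - k') * R * C ((n.choose k' : ℕ) : K) := by
          rw [← map_natCast (C : K →+* MvPolynomial (Fin 3) K)]; ring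
      _ = monomial (w k') ((n.choose k' : ℕ) : K) := by
          rw [hXX, C_apply, monomial_mul, add_zero, one_mul]
  have hstep : (aeval F : MvPolynomial (Fin 3) K →ₐ[K] MvPolynomial (Fin 3) K) (monomial u 1)
      = ∑ k' ∈ Finset.range (n + 1), monomial (w k') ((n.choose k' : ℕ) : K) := by
    rw [aeval_monomial]
    rw [Finsupp.prod_fintype _ _ (fun l => pow_zero _)]
    rw [map_one, one_mul]
    rw [← Finset.mul_prod_erase Finset.univ _ (Finset.mem_univ j), hFj]
    rw [Finset.prod_congr rfl (fun l hl => by rw [hFl l (Finset.mem_erase.1 hl).1]), ← hR, ← hn]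
    rw [add_pow, Finset.sum_mul]
    exact Finset.sum_congr rfl hterm
  have hpI : (aeval F : MvPolynomial (Fin 3) K →ₐ[K] MvPolynomial (Fin 3) K) (monomial u 1) ∈ I := by
    rw [← hmap]
    exact Ideal.mem_map_of_mem _ hu
  have hcoeff : coeff (w k) ((aeval F : MvPolynomial (Fin 3) K →ₐ[K] MvPolynomial (Fin 3) K)
      (monomial u 1)) = ((n.choose k : ℕ) : K) := by
    rw [hstep, coeff_sum]
    rw [Finset.sum_eq_single k]
    · rw [coeff_monomial, if_pos rfl]
    · intro k' hk' hkk
      rw [coeff_monomial, if_neg]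
      intro heq
      have h3 : w k' j = w k j := congrArg (fun v : Fin 3 →₀ ℕ => v j) heq
      rw [hwj k', hwj k] at h3
      have hk2 : k' ≤ n := Nat.lt_succ_iff.1 (Finset.mem_range.1 hk')
      exact hkk (by omega)
    · intro h
      exact absurd (Finset.mem_range.2 (Nat.lt_succ_of_le hk)) h
  have hsupp : w k ∈ ((aeval F : MvPolynomial (Fin 3) K →ₐ[K] MvPolynomial (Fin 3) K)
      (monomial u 1)).support := by
    rw [mem_support_iff, hcoeff]
    exact hco
  exact hmon _ hpI _ hsupp


lemma sat_step {K : Type} [Field K] {I : Ideal (MvPolynomial (Fin 3) K)}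
    (hsat : idealSat I (irrelevant 3 K) = I) {u : Fin 3 →₀ ℕ}
    (h : ∀ l : Fin 3, (monomial (u + Finsupp.single l 1) 1 : MvPolynomial (Fin 3) K) ∈ I) :
    (monomial u 1 : MvPolynomial (Fin 3) K) ∈ I := by
  have hc : (monomial u 1 : MvPolynomial (Fin 3) K) ∈ Submodule.colon I ((irrelevant 3 K ^ 1 : Ideal (MvPolynomial (Fin 3) K)) : Set (MvPolynomial (Fin 3) K)) := by
    rw [pow_one, Submodule.mem_colon]
    intro p hp
    have hp' : p ∈ Submodule.span (MvPolynomial (Fin 3) K) (Set.range X) := hp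
    clear hp
    refine Submodule.span_induction
      (p := fun x _ => (monomial u 1 : MvPolynomial (Fin 3) K) • x ∈ I) ?_ ?_ ?_ ?_ hp'
    · rintro x ⟨l, rfl⟩
      show (monomial u 1 : MvPolynomial (Fin 3) K) • (X l : MvPolynomial (Fin 3) K) ∈ I
      have hxl : (monomial u 1 : MvPolynomial (Fin 3) K) • (X l : MvPolynomial (Fin 3) K)
          = monomial (u + Finsupp.single l 1) 1 := by
        rw [smul_eq_mul, ← pow_one (X l : MvPolynomial (Fin 3) K), X_pow_eq_monomial,
          monomial_mul, one_mul]
      rw [hxl]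
      exact h l
    · show (monomial u 1 : MvPolynomial (Fin 3) K) • (0 : MvPolynomial (Fin 3) K) ∈ I
      rw [smul_zero]; exact I.zero_mem
    · intro x y _ _ ihx ihy
      show (monomial u 1 : MvPolynomial (Fin 3) K) • (x + y) ∈ I
      rw [smul_add]; exact I.add_mem ihx ihy
    · intro a x _ ih
      show (monomial u 1 : MvPolynomial (Fin 3) K) • (a • x) ∈ I
      rw [smul_eq_mul, smul_eq_mul, mul_left_comm]
      exact I.mul_mem_left a ih
  have h2 : (monomial u 1 : MvPolynomial (Fin 3) K) ∈ idealSat I (irrelevant 3 K) := by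
    have : Submodule.colon I ((irrelevant 3 K ^ 1 : Ideal (MvPolynomial (Fin 3) K)) : Set (MvPolynomial (Fin 3) K)) ≤ idealSat I (irrelevant 3 K) :=
      le_iSup (fun k => Submodule.colon I ((irrelevant 3 K ^ k : Ideal (MvPolynomial (Fin 3) K)) : Set (MvPolynomial (Fin 3) K))) 1
    exact this hc
  rwa [hsat] at h2

noncomputable def Dfin (i : ℕ) : Finset (Fin 3 →₀ ℕ) :=
  ((Finset.range (i+1) ×ˢ Finset.range (i+1)).filter fun p => p.1 + p.2 ≤ i).image
    fun p => fs3 p.1 p.2 (i - p.1 - p.2)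

lemma mem_Dfin {i : ℕ} {u : Fin 3 →₀ ℕ} : u ∈ Dfin i ↔ u 0 + u 1 + u 2 = i := by
  constructor
  · rintro hu
    obtain ⟨p, hp, rfl⟩ := Finset.mem_image.1 hu
    rw [Finset.mem_filter] at hp
    simp only [fs3_apply0, fs3_apply1, fs3_apply2]
    omega
  · intro hu
    refine Finset.mem_image.2 ⟨(u 0, u 1), ?_, ?_⟩
    · rw [Finset.mem_filter, Finset.mem_product, Finset.mem_range, Finset.mem_range]
      omega
    · rw [show i - u 0 - u 1 = u 2 by omega, fs3_self]

lemma degree3 (u : Fin 3 →₀ ℕ) : Finsupp.degree u = u 0 + u 1 + u 2 := by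
  rw [Finsupp.degree_apply]
  rw [Finset.sum_subset (Finset.subset_univ _)
    (fun x _ hx => Finsupp.notMem_support_iff.1 hx)]
  rw [Fin.sum_univ_three]

open scoped Classical in
noncomputable def Nfin {K : Type} [Field K] (I : Ideal (MvPolynomial (Fin 3) K)) (i : ℕ) :
    Finset (Fin 3 →₀ ℕ) :=
  (Dfin i).filter fun u => (monomial u 1 : MvPolynomial (Fin 3) K) ∉ I

lemma mem_Nfin {K : Type} [Field K] {I : Ideal (MvPolynomial (Fin 3) K)} {i : ℕ}
    {u : Fin 3 →₀ ℕ} :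
    u ∈ Nfin I i ↔ (u 0 + u 1 + u 2 = i) ∧ (monomial u 1 : MvPolynomial (Fin 3) K) ∉ I := by
  classical
  rw [Nfin]
  rw [Finset.mem_filter, mem_Dfin]

lemma hfn_eq {K : Type} [Field K] {I : Ideal (MvPolynomial (Fin 3) K)}
    (hmon : IsMonomialIdeal I) (i : ℕ) :
    hfn I i = (Nfin I i).card := by
  classical
  set π := (Ideal.Quotient.mkₐ K I).toLinearMap with hπ
  set b : ↥(Nfin I i) → (MvPolynomial (Fin 3) K ⧸ I) :=
    fun v => π (monomial (v : Fin 3 →₀ ℕ) 1) with hb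
  have hπapp : ∀ f : MvPolynomial (Fin 3) K, π f = Ideal.Quotient.mk I f := by
    intro f; rw [hπ, AlgHom.toLinearMap_apply, Ideal.Quotient.mkₐ_eq_mk]
  -- the homogeneous component is spanned by monomials
  have hspan : homogeneousSubmodule (Fin 3) K i
      = Submodule.span K ((fun u => (monomial u 1 : MvPolynomial (Fin 3) K)) ''
          {u : Fin 3 →₀ ℕ | u 0 + u 1 + u 2 = i}) := by
    apply le_antisymm
    · intro f hf
      rw [mem_homogeneousSubmodule] at hf
      rw [← support_sum_monomial_coeff f]
      apply Submodule.sum_mem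
      intro v hv
      have hvd : v 0 + v 1 + v 2 = i := by
        have h1 : Finsupp.degree v = i := by
          rw [Finsupp.degree_eq_weight_one]
          exact hf (mem_support_iff.1 hv)
        rw [degree3] at h1
        exact h1
      have : (monomial v (coeff v f) : MvPolynomial (Fin 3) K)
          = coeff v f • monomial v 1 := by
        rw [smul_monomial, smul_eq_mul, mul_one]
      rw [this]
      exact Submodule.smul_mem _ _ (Submodule.subset_span ⟨v, hvd, rfl⟩)
    · rw [Submodule.span_le]
      rintro _ ⟨u, hu, rfl⟩
      rw [SetLike.mem_coe, mem_homogeneousSubmodule]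
      exact isHomogeneous_monomial 1 (by rw [degree3]; exact hu)
  have hmapeq : (homogeneousSubmodule (Fin 3) K i).map π = Submodule.span K (Set.range b) := by
    rw [hspan, Submodule.map_span]
    apply le_antisymm
    · rw [Submodule.span_le]
      rintro _ ⟨_, ⟨u, hu, rfl⟩, rfl⟩
      by_cases hmem : (monomial u 1 : MvPolynomial (Fin 3) K) ∈ I
      · have : π (monomial u 1) = 0 := by
          rw [hπapp, Ideal.Quotient.eq_zero_iff_mem]
          exact hmem
        rw [SetLike.mem_coe, this]
        exact Submodule.zero_mem _
      · have huN : u ∈ Nfin I i := Finset.mem_filter.2 ⟨mem_Dfin.2 hu, hmem⟩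
        exact Submodule.subset_span ⟨⟨u, huN⟩, rfl⟩
    · rw [Submodule.span_le]
      rintro _ ⟨v, rfl⟩
      have hv := mem_Nfin.1 v.2
      exact Submodule.subset_span ⟨monomial (v : Fin 3 →₀ ℕ) 1, ⟨(v : Fin 3 →₀ ℕ),
        hv.1, rfl⟩, rfl⟩
  have hli : LinearIndependent K b := by
    rw [linearIndependent_iff']
    intro s g hsum v hv
    by_contra hg
    have h0 : (∑ t ∈ s, monomial (t : Fin 3 →₀ ℕ) (g t) : MvPolynomial (Fin 3) K) ∈ I := by
      rw [← Ideal.Quotient.eq_zero_iff_mem, map_sum]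
      have hterm : ∀ t ∈ s, Ideal.Quotient.mk I (monomial (t : Fin 3 →₀ ℕ) (g t)) = g t • b t := by
        intro t _
        calc Ideal.Quotient.mk I (monomial (t : Fin 3 →₀ ℕ) (g t))
            = π (g t • monomial (t : Fin 3 →₀ ℕ) 1) := by
              rw [smul_monomial, smul_eq_mul, mul_one, hπapp]
          _ = g t • b t := by rw [map_smul, hb]
      rw [Finset.sum_congr rfl hterm]
      exact hsum
    have hcv : coeff (v : Fin 3 →₀ ℕ) (∑ t ∈ s, monomial (t : Fin 3 →₀ ℕ) (g t)
        : MvPolynomial (Fin 3) K) = g v := by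
      rw [coeff_sum, Finset.sum_eq_single v]
      · rw [coeff_monomial, if_pos rfl]
      · intro t ht htv
        rw [coeff_monomial, if_neg (fun hh => htv (Subtype.ext hh))]
      · intro hh; exact absurd hv hh
    have hsup : (v : Fin 3 →₀ ℕ) ∈ (∑ t ∈ s, monomial (t : Fin 3 →₀ ℕ) (g t)
        : MvPolynomial (Fin 3) K).support := by
      rw [mem_support_iff, hcv]; exact hg
    have := hmon _ h0 _ hsup
    exact (mem_Nfin.1 v.2).2 this
  have hrk : hfn I i = Module.finrank K (Submodule.span K (Set.range b)) := by
    rw [hfn, hmapeq]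
  rw [hrk, finrank_span_eq_card hli, Fintype.card_coe]

/-! ### membership combinatorics -/

def G3 {K : Type} [Field K] (I : Ideal (MvPolynomial (Fin 3) K)) (a b : ℕ) : Prop :=
  ∃ c, (monomial (fs3 a b c) 1 : MvPolynomial (Fin 3) K) ∈ I

section Comb

variable {K : Type} [Field K] {I : Ideal (MvPolynomial (Fin 3) K)}

lemma mem_up {a b c a' b' c' : ℕ} (h : (monomial (fs3 a b c) 1 : MvPolynomial (Fin 3) K) ∈ I)
    (ha : a ≤ a') (hb : b ≤ b') (hc : c ≤ c') :
    (monomial (fs3 a' b' c') 1 : MvPolynomial (Fin 3) K) ∈ I := by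
  have he : fs3 a' b' c' = fs3 a b c + fs3 (a' - a) (b' - b) (c' - c) := by
    ext t
    rw [Finsupp.add_apply]
    fin_cases t <;> simp <;> omega
  rw [he]
  exact mono_mem_add h _

lemma G3_up {a b a' b' : ℕ} (h : G3 I a b) (ha : a ≤ a') (hb : b ≤ b') : G3 I a' b' := by
  obtain ⟨c, hc⟩ := h
  exact ⟨c, mem_up hc ha hb le_rfl⟩

variable (hmon : IsMonomialIdeal I) (hbf : BorelFixed I)
include hmon hbf

lemma sw20 {a b c : ℕ} (h : (monomial (fs3 a b c) 1 : MvPolynomial (Fin 3) K) ∈ I) :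
    (monomial (fs3 (a + c) b 0) 1 : MvPolynomial (Fin 3) K) ∈ I := by
  have hk : c ≤ fs3 a b c 2 := by simp
  have hco : (((fs3 a b c 2).choose c : ℕ) : K) ≠ 0 := by
    simp only [fs3_apply2, Nat.choose_self, Nat.cast_one]
    exact one_ne_zero
  have := borel_swap hmon hbf (i := 0) (j := 2) (by decide) h hk hco
  have he : fs3 a b c + Finsupp.single 0 c - Finsupp.single 2 c = fs3 (a + c) b 0 := by
    ext t
    rw [Finsupp.tsub_apply, Finsupp.add_apply]
    fin_cases t <;> simp [Finsupp.single_apply]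
  rwa [he] at this

lemma sw21 {a b c : ℕ} (h : (monomial (fs3 a b c) 1 : MvPolynomial (Fin 3) K) ∈ I) :
    (monomial (fs3 a (b + c) 0) 1 : MvPolynomial (Fin 3) K) ∈ I := by
  have hk : c ≤ fs3 a b c 2 := by simp
  have hco : (((fs3 a b c 2).choose c : ℕ) : K) ≠ 0 := by
    simp only [fs3_apply2, Nat.choose_self, Nat.cast_one]
    exact one_ne_zero
  have := borel_swap hmon hbf (i := 1) (j := 2) (by decide) h hk hco
  have he : fs3 a b c + Finsupp.single 1 c - Finsupp.single 2 c = fs3 a (b + c) 0 := by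
    ext t
    rw [Finsupp.tsub_apply, Finsupp.add_apply]
    fin_cases t <;> simp [Finsupp.single_apply]
  rwa [he] at this

lemma sw10 {a b c : ℕ} (h : (monomial (fs3 a b c) 1 : MvPolynomial (Fin 3) K) ∈ I) :
    (monomial (fs3 (a + b) 0 c) 1 : MvPolynomial (Fin 3) K) ∈ I := by
  have hk : b ≤ fs3 a b c 1 := by simp
  have hco : (((fs3 a b c 1).choose b : ℕ) : K) ≠ 0 := by
    simp only [fs3_apply1, Nat.choose_self, Nat.cast_one]
    exact one_ne_zero
  have := borel_swap hmon hbf (i := 0) (j := 1) (by decide) h hk hco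
  have he : fs3 a b c + Finsupp.single 0 b - Finsupp.single 1 b = fs3 (a + b) 0 c := by
    ext t
    rw [Finsupp.tsub_apply, Finsupp.add_apply]
    fin_cases t <;> simp [Finsupp.single_apply]
  rwa [he] at this

lemma sw10one (hchar : (2 : K) ≠ 0) {a c : ℕ}
    (h : (monomial (fs3 a 2 c) 1 : MvPolynomial (Fin 3) K) ∈ I) :
    (monomial (fs3 (a + 1) 1 c) 1 : MvPolynomial (Fin 3) K) ∈ I := by
  have hk : 1 ≤ fs3 a 2 c 1 := by simp
  have hco : (((fs3 a 2 c 1).choose 1 : ℕ) : K) ≠ 0 := by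
    simp only [fs3_apply1, Nat.choose_one_right]
    intro h2
    exact hchar (by rw [← h2]; norm_num)
  have := borel_swap hmon hbf (i := 0) (j := 1) (by decide) h hk hco
  have he : fs3 a 2 c + Finsupp.single 0 1 - Finsupp.single 1 1 = fs3 (a + 1) 1 c := by
    ext t
    rw [Finsupp.tsub_apply, Finsupp.add_apply]
    fin_cases t <;> simp [Finsupp.single_apply]
  rwa [he] at this

end Comb

lemma sat3 {K : Type} [Field K] {I : Ideal (MvPolynomial (Fin 3) K)}
    (hsat : idealSat I (irrelevant 3 K) = I) {a b c : ℕ}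
    (h0 : (monomial (fs3 (a + 1) b c) 1 : MvPolynomial (Fin 3) K) ∈ I)
    (h1 : (monomial (fs3 a (b + 1) c) 1 : MvPolynomial (Fin 3) K) ∈ I)
    (h2 : (monomial (fs3 a b (c + 1)) 1 : MvPolynomial (Fin 3) K) ∈ I) :
    (monomial (fs3 a b c) 1 : MvPolynomial (Fin 3) K) ∈ I := by
  apply sat_step hsat
  intro l
  fin_cases l
  · show (monomial (fs3 a b c + Finsupp.single (0 : Fin 3) 1) 1 : MvPolynomial (Fin 3) K) ∈ I
    have he : fs3 a b c + Finsupp.single (0 : Fin 3) 1 = fs3 (a + 1) b c := by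
      ext t
      rw [Finsupp.add_apply]
      fin_cases t <;> simp [Finsupp.single_apply]
    rw [he]; exact h0
  · show (monomial (fs3 a b c + Finsupp.single (1 : Fin 3) 1) 1 : MvPolynomial (Fin 3) K) ∈ I
    have he : fs3 a b c + Finsupp.single (1 : Fin 3) 1 = fs3 a (b + 1) c := by
      ext t
      rw [Finsupp.add_apply]
      fin_cases t <;> simp [Finsupp.single_apply]
    rw [he]; exact h1
  · show (monomial (fs3 a b c + Finsupp.single (2 : Fin 3) 1) 1 : MvPolynomial (Fin 3) K) ∈ I
    have he : fs3 a b c + Finsupp.single (2 : Fin 3) 1 = fs3 a b (c + 1) := by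
      ext t
      rw [Finsupp.add_apply]
      fin_cases t <;> simp [Finsupp.single_apply]
    rw [he]; exact h2

lemma mono_factor {K : Type} [Field K] {v e : Fin 3 →₀ ℕ} (h : ∀ t, e t ≤ v t) (c : K) :
    (monomial v c : MvPolynomial (Fin 3) K) = monomial (v - e) c * monomial e 1 := by
  have hve : v - e + e = v := by
    ext t
    rw [Finsupp.add_apply, Finsupp.tsub_apply]
    have := h t
    omega
  rw [monomial_mul, mul_one, hve]

lemma single0_eq_fs3 (a : ℕ) : Finsupp.single (0 : Fin 3) a = fs3 a 0 0 := by
  ext t; fin_cases t <;> simp [Finsupp.single_apply]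

lemma single1_eq_fs3 (b : ℕ) : Finsupp.single (1 : Fin 3) b = fs3 0 b 0 := by
  ext t; fin_cases t <;> simp [Finsupp.single_apply]

/-- A saturated Borel-fixed monomial ideal in `K[x_0, x_1, x_2]` over an infinite field of
characteristic `≠ 2`, with Hilbert polynomial of the quotient the constant `4`, is
`⟨x_0, x_1^4⟩` or `⟨x_0^2, x_0 x_1, x_1^3⟩`. -/
theorem borelFixed_hilbPoly_four {K : Type} [Field K] [Infinite K] (hchar : (2 : K) ≠ 0)
    (I : Ideal (MvPolynomial (Fin 3) K))
    (hmon : IsMonomialIdeal I) (hbf : BorelFixed I)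
    (hsat : idealSat I (irrelevant 3 K) = I)
    (hhp : ∃ N : ℕ, ∀ i ≥ N, hfn I i = 4) :
    I = Ideal.span {(X 0 : MvPolynomial (Fin 3) K), X 1 ^ 4} ∨
    I = Ideal.span {(X 0 ^ 2 : MvPolynomial (Fin 3) K), X 0 * X 1, X 1 ^ 3} := by
  classical
  obtain ⟨N, hN⟩ := hhp
  have hcard : ∀ i, N ≤ i → (Nfin I i).card = 4 := by
    intro i hi
    rw [← hfn_eq hmon]
    exact hN i hi
  have hmemN : ∀ (i a b c : ℕ), a + b + c = i →
      (monomial (fs3 a b c) 1 : MvPolynomial (Fin 3) K) ∉ I → fs3 a b c ∈ Nfin I i := by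
    intro i a b c hs hnm
    refine mem_Nfin.2 ⟨?_, hnm⟩
    simp only [fs3_apply0, fs3_apply1, fs3_apply2]
    exact hs
  have hx2 : ∀ c, (monomial (fs3 0 0 c) 1 : MvPolynomial (Fin 3) K) ∉ I := by
    intro c hc
    have h20 : (monomial (fs3 (0 + c) 0 0) 1 : MvPolynomial (Fin 3) K) ∈ I := sw20 hmon hbf hc
    have h21 : (monomial (fs3 0 (0 + c) 0) 1 : MvPolynomial (Fin 3) K) ∈ I := sw21 hmon hbf hc
    have hcardi := hcard (N + 3 * c + 3) (by omega)
    have hempty : Nfin I (N + 3 * c + 3) = ∅ := by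
      rw [Finset.eq_empty_iff_forall_notMem]
      intro u hu
      rw [mem_Nfin] at hu
      apply hu.2
      have hs := hu.1
      have hx : (monomial (fs3 (u 0) (u 1) (u 2)) 1 : MvPolynomial (Fin 3) K) ∈ I := by
        rcases (by omega : c ≤ u 0 ∨ c ≤ u 1 ∨ c ≤ u 2) with h | h | h
        · exact mem_up h20 (by omega) (by omega) (by omega)
        · exact mem_up h21 (by omega) (by omega) (by omega)
        · exact mem_up hc (by omega) (by omega) (by omega)
      rwa [fs3_self] at hx
    rw [hempty] at hcardi
    simp at hcardi
  have hG00 : ¬ G3 I 0 0 := fun h => hx2 h.choose h.choose_spec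
  have hbox : ∀ a b : ℕ, ¬ G3 I a b → a ≤ 3 ∧ b ≤ 3 := by
    intro a b hG
    by_contra hcon
    rcases (by omega : 4 ≤ a ∨ 4 ≤ b) with h4 | h4
    · set i := N + a + b with hi
      have hsub : (Finset.range 5).image (fun t => fs3 t b (i - t - b)) ⊆ Nfin I i := by
        intro u hu
        obtain ⟨t, ht, rfl⟩ := Finset.mem_image.1 hu
        rw [Finset.mem_range] at ht
        apply hmemN _ _ _ _ (by omega)
        intro hmem
        exact hG (G3_up ⟨_, hmem⟩ (by omega) le_rfl)
      have hcard5 : ((Finset.range 5).image (fun t => fs3 t b (i - t - b))).card = 5 := by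
        rw [Finset.card_image_of_injOn, Finset.card_range]
        intro x _ y _ hxy
        have h0 := congrArg (fun v : Fin 3 →₀ ℕ => v 0) hxy
        simpa using h0
      have hle := Finset.card_le_card hsub
      rw [hcard5, hcard i (by omega)] at hle
      omega
    · set i := N + a + b with hi
      have hsub : (Finset.range 5).image (fun t => fs3 a t (i - a - t)) ⊆ Nfin I i := by
        intro u hu
        obtain ⟨t, ht, rfl⟩ := Finset.mem_image.1 hu
        rw [Finset.mem_range] at ht
        apply hmemN _ _ _ _ (by omega)
        intro hmem
        exact hG (G3_up ⟨_, hmem⟩ le_rfl (by omega))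
      have hcard5 : ((Finset.range 5).image (fun t => fs3 a t (i - a - t))).card = 5 := by
        rw [Finset.card_image_of_injOn, Finset.card_range]
        intro x _ y _ hxy
        have h0 := congrArg (fun v : Fin 3 →₀ ℕ => v 1) hxy
        simpa using h0
      have hle := Finset.card_le_card hsub
      rw [hcard5, hcard i (by omega)] at hle
      omega
  obtain ⟨C, hC⟩ : ∃ C : ℕ, ∀ a b : ℕ, G3 I a b → ∀ c, C ≤ c →
      (monomial (fs3 a b c) 1 : MvPolynomial (Fin 3) K) ∈ I := by
    set w : ℕ × ℕ → ℕ := fun p => if h : G3 I p.1 p.2 then h.choose else 0 with hw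
    refine ⟨(Finset.range 5 ×ˢ Finset.range 5).sup w, ?_⟩
    intro a b hG c hc
    obtain ⟨p, q, hpa, hqb, hp5, hq5, hpq⟩ :
        ∃ p q, p ≤ a ∧ q ≤ b ∧ p < 5 ∧ q < 5 ∧ G3 I p q := by
      by_cases ha4 : a ≤ 3
      · by_cases hb4 : b ≤ 3
        · exact ⟨a, b, le_rfl, le_rfl, by omega, by omega, hG⟩
        · refine ⟨min a 4, 4, by omega, by omega, by omega, by omega, ?_⟩
          by_contra hng
          exact absurd (hbox _ _ hng).2 (by omega)
      · refine ⟨4, min b 4, by omega, by omega, by omega, by omega, ?_⟩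
        by_contra hng
        exact absurd (hbox _ _ hng).1 (by omega)
    have hwit : (monomial (fs3 p q (hpq.choose)) 1 : MvPolynomial (Fin 3) K) ∈ I :=
      hpq.choose_spec
    have hle : w (p, q) ≤ (Finset.range 5 ×ˢ Finset.range 5).sup w := by
      apply Finset.le_sup
      rw [Finset.mem_product, Finset.mem_range, Finset.mem_range]
      exact ⟨hp5, hq5⟩
    have hwpq : w (p, q) = hpq.choose := dif_pos hpq
    exact mem_up hwit hpa hqb (by omega)
  have hbig : ∀ a b : ℕ, G3 I a b → (C + 4 ≤ a ∨ C + 4 ≤ b) →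
      (monomial (fs3 a b 0) 1 : MvPolynomial (Fin 3) K) ∈ I := by
    intro a b hG hab
    rcases hab with h4 | h4
    · have hG' : G3 I (a - C) b := by
        by_contra hng
        exact absurd (hbox _ _ hng).1 (by omega)
      have h1 := hC _ _ hG' C le_rfl
      have h2 := sw20 hmon hbf h1
      rwa [show a - C + C = a by omega] at h2
    · have hG' : G3 I a (b - C) := by
        by_contra hng
        exact absurd (hbox _ _ hng).2 (by omega)
      have h1 := hC _ _ hG' C le_rfl
      have h2 := sw21 hmon hbf h1
      rwa [show b - C + C = b by omega] at h2
  set i₁ := N + 3 * C + 20 with hi₁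
  have huni : ∀ a b c : ℕ, G3 I a b → i₁ ≤ a + b + c →
      (monomial (fs3 a b c) 1 : MvPolynomial (Fin 3) K) ∈ I := by
    intro a b c hG hs
    by_cases hab : C + 4 ≤ a ∨ C + 4 ≤ b
    · exact mem_up (hbig a b hG hab) le_rfl le_rfl (by omega)
    · push_neg at hab
      obtain ⟨ha, hb⟩ := hab
      exact hC _ _ hG c (by omega)
  set Ffin : Finset (ℕ × ℕ) :=
    (Finset.range 4 ×ˢ Finset.range 4).filter (fun p => ¬ G3 I p.1 p.2) with hFfin
  have hmemF : ∀ p : ℕ × ℕ, p ∈ Ffin ↔ (p.1 < 4 ∧ p.2 < 4 ∧ ¬ G3 I p.1 p.2) := by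
    intro p
    rw [hFfin, Finset.mem_filter, Finset.mem_product, Finset.mem_range, Finset.mem_range]
    tauto
  have hFcard : Ffin.card = 4 := by
    have himg : Nfin I i₁ = Ffin.image (fun p => fs3 p.1 p.2 (i₁ - p.1 - p.2)) := by
      ext u
      rw [mem_Nfin]
      constructor
      · rintro ⟨hs, hnm⟩
        have hNG : ¬ G3 I (u 0) (u 1) := by
          intro hG
          apply hnm
          have hm := huni _ _ (u 2) hG (by omega)
          rwa [fs3_self] at hm
        have hb := hbox _ _ hNG
        refine Finset.mem_image.2 ⟨(u 0, u 1), (hmemF _).2 ⟨by omega, by omega, hNG⟩, ?_⟩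
        rw [show i₁ - u 0 - u 1 = u 2 by omega]
        exact fs3_self u
      · rintro hu
        obtain ⟨p, hp, rfl⟩ := Finset.mem_image.1 hu
        rw [hmemF] at hp
        constructor
        · simp only [fs3_apply0, fs3_apply1, fs3_apply2]
          omega
        · intro hmem
          exact hp.2.2 ⟨_, hmem⟩
    have hinj : (Ffin.image (fun p => fs3 p.1 p.2 (i₁ - p.1 - p.2))).card = Ffin.card := by
      rw [Finset.card_image_of_injOn]
      intro x hx y hy hxy
      have h0 := congrArg (fun v : Fin 3 →₀ ℕ => v 0) hxy
      have h1 := congrArg (fun v : Fin 3 →₀ ℕ => v 1) hxy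
      simp only [fs3_apply0, fs3_apply1] at h0 h1
      exact Prod.ext h0 h1
    have hc4 := hcard i₁ (by omega)
    rw [himg, hinj] at hc4
    exact hc4
  have hfull : ∀ a b : ℕ, G3 I a b → ∀ c : ℕ,
      (monomial (fs3 a b c) 1 : MvPolynomial (Fin 3) K) ∈ I := by
    have haux : ∀ d a b c : ℕ, G3 I a b → i₁ ≤ a + b + c + d →
        (monomial (fs3 a b c) 1 : MvPolynomial (Fin 3) K) ∈ I := by
      intro d
      induction d with
      | zero => intro a b c hG hs; exact huni a b c hG (by omega)
      | succ d ih =>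
          intro a b c hG hs
          by_cases hd : i₁ ≤ a + b + c
          · exact huni a b c hG hd
          · exact sat3 hsat (ih (a+1) b c (G3_up hG (by omega) le_rfl) (by omega))
              (ih a (b+1) c (G3_up hG le_rfl (by omega)) (by omega))
              (ih a b (c+1) hG (by omega))
    intro a b hG c
    exact haux i₁ a b c hG (by omega)
  have hmemiff : ∀ u : Fin 3 →₀ ℕ,
      (monomial u 1 : MvPolynomial (Fin 3) K) ∈ I ↔ G3 I (u 0) (u 1) := by
    intro u
    constructor
    · intro h
      exact ⟨u 2, by rwa [fs3_self]⟩
    · intro hG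
      have hm := hfull _ _ hG (u 2)
      rwa [fs3_self] at hm
  have hR1 : ∀ a, G3 I a 1 → G3 I (a + 1) 0 := by
    rintro a ⟨c, hc⟩
    exact ⟨c, sw10 hmon hbf hc⟩
  have hR2 : ∀ a, G3 I a 2 → G3 I (a + 1) 1 := by
    rintro a ⟨c, hc⟩
    exact ⟨c, sw10one hmon hbf hchar hc⟩
  have hX0 : (X 0 : MvPolynomial (Fin 3) K) = monomial (fs3 1 0 0) 1 := by
    rw [← pow_one (X (0 : Fin 3) : MvPolynomial (Fin 3) K), X_pow_eq_monomial, single0_eq_fs3]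
  have hX02 : (X 0 ^ 2 : MvPolynomial (Fin 3) K) = monomial (fs3 2 0 0) 1 := by
    rw [X_pow_eq_monomial, single0_eq_fs3]
  have hX14 : (X 1 ^ 4 : MvPolynomial (Fin 3) K) = monomial (fs3 0 4 0) 1 := by
    rw [X_pow_eq_monomial, single1_eq_fs3]
  have hX13 : (X 1 ^ 3 : MvPolynomial (Fin 3) K) = monomial (fs3 0 3 0) 1 := by
    rw [X_pow_eq_monomial, single1_eq_fs3]
  have hX01 : (X 0 * X 1 : MvPolynomial (Fin 3) K) = monomial (fs3 1 1 0) 1 := by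
    have hee : fs3 1 0 0 + fs3 0 1 0 = fs3 1 1 0 := by
      ext t
      rw [Finsupp.add_apply]
      fin_cases t <;> simp
    rw [hX0, ← pow_one (X (1 : Fin 3) : MvPolynomial (Fin 3) K), X_pow_eq_monomial,
      single1_eq_fs3, monomial_mul, one_mul, hee]
  by_cases hG10 : G3 I 1 0
  · left
    have hFsub : Ffin ⊆ {(0,0),(0,1),(0,2),(0,3)} := by
      intro p hp
      rw [hmemF] at hp
      obtain ⟨h1, h2, h3⟩ := hp
      have hp1 : p.1 = 0 := by
        by_contra hne
        exact h3 (G3_up hG10 (by omega) (by omega))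
      have hpp : p = (0, p.2) := by
        rw [← hp1]
      rw [hpp]
      simp only [Finset.mem_insert, Finset.mem_singleton, Prod.mk.injEq, true_and, and_true]
      omega
    have hFeq : Ffin = {(0,0),(0,1),(0,2),(0,3)} := by
      apply Finset.eq_of_subset_of_card_le hFsub
      rw [hFcard]
      decide
    have hnG0 : ∀ b, b ≤ 3 → ¬ G3 I 0 b := by
      intro b hb
      have hmem : ((0 : ℕ), b) ∈ Ffin := by
        rw [hFeq]
        simp only [Finset.mem_insert, Finset.mem_singleton, Prod.mk.injEq, true_and, and_true]
        omega
      exact ((hmemF _).1 hmem).2.2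
    have hG04 : G3 I 0 4 := by
      by_contra hng
      exact absurd (hbox _ _ hng).2 (by omega)
    apply le_antisymm
    · intro f hf
      rw [← support_sum_monomial_coeff f]
      apply Ideal.sum_mem
      intro v hv
      have hvI := hmon f hf v hv
      have hvG := (hmemiff v).1 hvI
      have hcases : 1 ≤ v 0 ∨ 4 ≤ v 1 := by
        by_contra hcon
        push_neg at hcon
        refine hnG0 (v 1) (by omega) ?_
        rwa [show (0 : ℕ) = v 0 by omega]
      rcases hcases with h | h
      · have he : ∀ t, (fs3 1 0 0) t ≤ v t := by
          intro t
          have h3 : t = 0 ∨ t = 1 ∨ t = 2 := by omega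
          rcases h3 with rfl | rfl | rfl <;> simp <;> omega
        rw [mono_factor he (coeff v f)]
        apply Ideal.mul_mem_left
        apply Ideal.subset_span
        rw [← hX0]
        exact Set.mem_insert _ _
      · have he : ∀ t, (fs3 0 4 0) t ≤ v t := by
          intro t
          have h3 : t = 0 ∨ t = 1 ∨ t = 2 := by omega
          rcases h3 with rfl | rfl | rfl <;> simp <;> omega
        rw [mono_factor he (coeff v f)]
        apply Ideal.mul_mem_left
        apply Ideal.subset_span
        rw [← hX14]
        exact Set.mem_insert_iff.2 (Or.inr rfl)
    · rw [Ideal.span_le]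
      rintro x hx
      simp only [Set.mem_insert_iff, Set.mem_singleton_iff] at hx
      rcases hx with rfl | rfl
      · show (X 0 : MvPolynomial (Fin 3) K) ∈ I
        rw [hX0]
        exact (hmemiff _).2 (by simpa using hG10)
      · show (X 1 ^ 4 : MvPolynomial (Fin 3) K) ∈ I
        rw [hX14]
        exact (hmemiff _).2 (by simpa using hG04)
  · by_cases hG20 : G3 I 2 0
    · right
      have hG11 : G3 I 1 1 := by
        by_contra hn11
        have hn01 : ¬ G3 I 0 1 := fun h => hn11 (G3_up h (by omega) le_rfl)
        by_cases hG02 : G3 I 0 2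
        · exact hn11 (hR2 0 hG02)
        · have hsub5 : ({(0,0),(1,0),(0,1),(1,1),(0,2)} : Finset (ℕ × ℕ)) ⊆ Ffin := by
            intro p hp
            simp only [Finset.mem_insert, Finset.mem_singleton] at hp
            rw [hmemF]
            rcases hp with rfl | rfl | rfl | rfl | rfl
            · exact ⟨by omega, by omega, hG00⟩
            · exact ⟨by omega, by omega, hG10⟩
            · exact ⟨by omega, by omega, hn01⟩
            · exact ⟨by omega, by omega, hn11⟩
            · exact ⟨by omega, by omega, hG02⟩
          have hle5 := Finset.card_le_card hsub5
          have hc5 : ({(0,0),(1,0),(0,1),(1,1),(0,2)} : Finset (ℕ × ℕ)).card = 5 := by decide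
          rw [hc5, hFcard] at hle5
          omega
      have hnG03 : G3 I 0 3 := by
        by_contra hn03
        have hdown : ∀ b, b ≤ 3 → ¬ G3 I 0 b := fun b hb h =>
          hn03 (G3_up h le_rfl (by omega))
        have hsub5 : ({(0,0),(0,1),(0,2),(0,3),(1,0)} : Finset (ℕ × ℕ)) ⊆ Ffin := by
          intro p hp
          simp only [Finset.mem_insert, Finset.mem_singleton] at hp
          rw [hmemF]
          rcases hp with rfl | rfl | rfl | rfl | rfl
          · exact ⟨by omega, by omega, hdown 0 (by omega)⟩
          · exact ⟨by omega, by omega, hdown 1 (by omega)⟩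
          · exact ⟨by omega, by omega, hdown 2 (by omega)⟩
          · exact ⟨by omega, by omega, hdown 3 (by omega)⟩
          · exact ⟨by omega, by omega, hG10⟩
        have hle5 := Finset.card_le_card hsub5
        have hc5 : ({(0,0),(0,1),(0,2),(0,3),(1,0)} : Finset (ℕ × ℕ)).card = 5 := by decide
        rw [hc5, hFcard] at hle5
        omega
      have hFsub : Ffin ⊆ {(0,0),(0,1),(0,2),(1,0)} := by
        intro p hp
        rw [hmemF] at hp
        obtain ⟨h1, h2, h3⟩ := hp
        obtain ⟨p1, p2⟩ := p
        simp only [] at h1 h2 h3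
        simp only [Finset.mem_insert, Finset.mem_singleton, Prod.mk.injEq]
        by_cases hp2 : 2 ≤ p1
        · exfalso
          exact h3 (G3_up (a' := p1) (b' := p2) hG20 (by omega) (by omega))
        · by_cases hp1 : p1 = 1
          · by_cases hq1 : 1 ≤ p2
            · exfalso
              exact h3 (G3_up (a' := p1) (b' := p2) hG11 (by omega) (by omega))
            · omega
          · by_cases hq3 : p2 = 3
            · exfalso
              exact h3 (G3_up (a' := p1) (b' := p2) hnG03 (by omega) (by omega))
            · omega
      have hFeq : Ffin = {(0,0),(0,1),(0,2),(1,0)} := by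
        apply Finset.eq_of_subset_of_card_le hFsub
        rw [hFcard]
        decide
      have hnG0b : ∀ b, b ≤ 2 → ¬ G3 I 0 b := by
        intro b hb
        have hmem : ((0 : ℕ), b) ∈ Ffin := by
          rw [hFeq]
          simp only [Finset.mem_insert, Finset.mem_singleton, Prod.mk.injEq, true_and, and_true]
          omega
        exact ((hmemF _).1 hmem).2.2
      apply le_antisymm
      · intro f hf
        rw [← support_sum_monomial_coeff f]
        apply Ideal.sum_mem
        intro v hv
        have hvI := hmon f hf v hv
        have hvG := (hmemiff v).1 hvI
        have hcases : 2 ≤ v 0 ∨ (1 ≤ v 0 ∧ 1 ≤ v 1) ∨ 3 ≤ v 1 := by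
          by_contra hcon
          push_neg at hcon
          obtain ⟨hc1, hc2, hc3⟩ := hcon
          rcases (by omega : v 0 = 0 ∨ (v 0 = 1 ∧ v 1 = 0)) with h0 | ⟨h0, h1⟩
          · refine hnG0b (v 1) (by omega) ?_
            rwa [show (0 : ℕ) = v 0 by omega]
          · apply hG10
            rwa [show (1 : ℕ) = v 0 by omega, show (0 : ℕ) = v 1 by omega]
        rcases hcases with h | ⟨ha, hb⟩ | h
        · have he : ∀ t, (fs3 2 0 0) t ≤ v t := by
            intro t
            have h3 : t = 0 ∨ t = 1 ∨ t = 2 := by omega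
            rcases h3 with rfl | rfl | rfl <;> simp <;> omega
          rw [mono_factor he (coeff v f)]
          apply Ideal.mul_mem_left
          apply Ideal.subset_span
          rw [← hX02]
          exact Set.mem_insert _ _
        · have he : ∀ t, (fs3 1 1 0) t ≤ v t := by
            intro t
            have h3 : t = 0 ∨ t = 1 ∨ t = 2 := by omega
            rcases h3 with rfl | rfl | rfl <;> simp <;> omega
          rw [mono_factor he (coeff v f)]
          apply Ideal.mul_mem_left
          apply Ideal.subset_span
          rw [← hX01]
          exact Set.mem_insert_iff.2 (Or.inr (Set.mem_insert _ _))
        · have he : ∀ t, (fs3 0 3 0) t ≤ v t := by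
            intro t
            have h3 : t = 0 ∨ t = 1 ∨ t = 2 := by omega
            rcases h3 with rfl | rfl | rfl <;> simp <;> omega
          rw [mono_factor he (coeff v f)]
          apply Ideal.mul_mem_left
          apply Ideal.subset_span
          rw [← hX13]
          exact Set.mem_insert_iff.2 (Or.inr (Set.mem_insert_iff.2 (Or.inr rfl)))
      · rw [Ideal.span_le]
        rintro x hx
        simp only [Set.mem_insert_iff, Set.mem_singleton_iff] at hx
        rcases hx with rfl | rfl | rfl
        · show (X 0 ^ 2 : MvPolynomial (Fin 3) K) ∈ I
          rw [hX02]
          exact (hmemiff _).2 (by simpa using hG20)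
        · show (X 0 * X 1 : MvPolynomial (Fin 3) K) ∈ I
          rw [hX01]
          exact (hmemiff _).2 (by simpa using hG11)
        · show (X 1 ^ 3 : MvPolynomial (Fin 3) K) ∈ I
          rw [hX13]
          exact (hmemiff _).2 (by simpa using hnG03)
    · exfalso
      have hn11 : ¬ G3 I 1 1 := fun h => hG20 (hR1 1 h)
      have hn01 : ¬ G3 I 0 1 := fun h => hn11 (G3_up h (by omega) le_rfl)
      have hn10 : ¬ G3 I 1 0 := hG10
      have hsub5 : ({(0,0),(1,0),(2,0),(0,1),(1,1)} : Finset (ℕ × ℕ)) ⊆ Ffin := by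
        intro p hp
        simp only [Finset.mem_insert, Finset.mem_singleton] at hp
        rw [hmemF]
        rcases hp with rfl | rfl | rfl | rfl | rfl
        · exact ⟨by omega, by omega, hG00⟩
        · exact ⟨by omega, by omega, hn10⟩
        · exact ⟨by omega, by omega, hG20⟩
        · exact ⟨by omega, by omega, hn01⟩
        · exact ⟨by omega, by omega, hn11⟩
      have hle5 := Finset.card_le_card hsub5
      have hc5 : ({(0,0),(1,0),(2,0),(0,1),(1,1)} : Finset (ℕ × ℕ)).card = 5 := by decide
      rw [hc5, hFcard] at hle5
      omega
end

section
/- Over the field F_2, the ideal I = ⟨x_0^2 + x_0 x_1 + x_1^2⟩ ⊂ F_2[x_0, x_1, x_2] is fixed by the action of every invertible upper-triangular matrix in GL_3(F_2), and the Hilbert polynomial of the quotient ring is 2t + 1. -/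
open MvPolynomial

/-! ### Auxiliary material -/

/-- Abbreviation for the ambient polynomial ring. -/
abbrev S3 := MvPolynomial (Fin 3) (ZMod 2)

/-- The generator `x_0^2 + x_0 x_1 + x_1^2`. -/
noncomputable abbrev ff : S3 := X 0 ^ 2 + X 0 * X 1 + X 1 ^ 2

lemma ff_homog : ff.IsHomogeneous 2 := by
  apply MvPolynomial.IsHomogeneous.add
  apply MvPolynomial.IsHomogeneous.add
  · exact isHomogeneous_X_pow _ _
  · exact (isHomogeneous_X _ 0).mul (isHomogeneous_X _ 1)
  · exact isHomogeneous_X_pow _ _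

lemma ff_ne : (ff : S3) ≠ 0 := by
  intro h
  have := congrArg (eval (fun j : Fin 3 => if j = 0 then 1 else 0)) h
  simp at this

/-- Multiplication by a homogeneous polynomial shifts homogeneous components. -/
lemma homComp_mul {K : Type} [Field K] {σ : Type*} (f q : MvPolynomial σ K) (d n : ℕ)
    (hf : f.IsHomogeneous d) :
    homogeneousComponent (d + n) (f * q) = f * homogeneousComponent n q := by
  conv_lhs => rw [← sum_homogeneousComponent q, Finset.mul_sum, map_sum]
  have h : ∀ k, homogeneousComponent (d + n) (f * homogeneousComponent k q)
      = if k = n then f * homogeneousComponent k q else 0 := by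
    intro k
    have hm : f * homogeneousComponent k q ∈ homogeneousSubmodule σ K (d + k) :=
      hf.mul (homogeneousComponent_isHomogeneous k q)
    rw [homogeneousComponent_of_mem hm]
    simp [Nat.add_right_cancel_iff, eq_comm]
  simp_rw [h]
  rw [Finset.sum_ite_eq' (Finset.range (q.totalDegree + 1)) n
    (fun k => f * homogeneousComponent k q)]
  split_ifs with hn
  · rfl
  · rw [Finset.mem_range, not_lt] at hn
    rw [homogeneousComponent_eq_zero _ q (by omega), mul_zero]

/-- Multiplication by `ff`, as a linear map from the degree-`j` component. -/
noncomputable def mulF (j : ℕ) : homogeneousSubmodule (Fin 3) (ZMod 2) j →ₗ[ZMod 2] S3 :=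
  (LinearMap.mulLeft (ZMod 2) ff).comp (Submodule.subtype _)

lemma mulF_inj (j : ℕ) : Function.Injective (mulF j) := by
  intro a b hab
  have : (ff : S3) * a = ff * b := hab
  exact Subtype.ext (mul_left_cancel₀ ff_ne this)

/-- The degree-`(j+2)` part of the principal ideal `(ff)` is exactly `ff ·` (degree-`j` part). -/
lemma inf_eq (j : ℕ) :
    (Ideal.span {ff}).restrictScalars (ZMod 2) ⊓ homogeneousSubmodule (Fin 3) (ZMod 2) (j + 2)
      = LinearMap.range (mulF j) := by
  apply le_antisymm
  · rintro g ⟨hg1, hg2⟩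
    obtain ⟨q, hq⟩ := Ideal.mem_span_singleton'.mp hg1
    refine ⟨⟨homogeneousComponent j q, homogeneousComponent_isHomogeneous j q⟩, ?_⟩
    show (ff : S3) * homogeneousComponent j q = g
    rw [← homComp_mul ff q 2 j ff_homog]
    have : (ff : S3) * q = g := by rw [mul_comm]; exact hq
    rw [this]
    have hg2' : g ∈ homogeneousSubmodule (Fin 3) (ZMod 2) (j + 2) := hg2
    rw [homogeneousComponent_of_mem hg2', if_pos (by omega)]
  · rintro g ⟨⟨h, hh⟩, rfl⟩
    constructor
    · exact Ideal.mem_span_singleton'.mpr ⟨h, mul_comm _ _⟩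
    · show ((ff : S3) * h).IsHomogeneous (j + 2)
      have := ff_homog.mul hh
      rwa [Nat.add_comm] at this

noncomputable instance symFintype (i : ℕ) : Fintype {d : Fin 3 →₀ ℕ // d.degree = i} :=
  Fintype.ofEquiv (Sym (Fin 3) i)
    ((Sym.equivNatSum (Fin 3) i).trans (Equiv.subtypeEquivRight (fun d => by
      simp [Finsupp.degree, Finsupp.sum]; rfl)))

lemma card_deg (i : ℕ) : Fintype.card {d : Fin 3 →₀ ℕ // d.degree = i} = (i + 2).choose i := by
  rw [← Fintype.card_congr ((Sym.equivNatSum (Fin 3) i).trans (Equiv.subtypeEquivRight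
      (fun d => by simp [Finsupp.degree, Finsupp.sum]; rfl)))]
  rw [Sym.card_sym_eq_choose]
  congr 1
  simp [Nat.add_comm]

/-- A monomial basis of the degree-`i` homogeneous component. -/
noncomputable def homogBasis (K : Type) [Field K] (i : ℕ) :
    Module.Basis {d : Fin 3 →₀ ℕ // d.degree = i} K (homogeneousSubmodule (Fin 3) K i) := by
  rw [homogeneousSubmodule_eq_finsupp_supported]
  exact MvPolynomial.basisRestrictSupport K {d | d.degree = i}

instance homogFD (K : Type) [Field K] (i : ℕ) :
    FiniteDimensional K (homogeneousSubmodule (Fin 3) K i) :=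
  Module.Finite.of_basis (homogBasis K i)

lemma finrank_homog (K : Type) [Field K] (i : ℕ) :
    Module.finrank K (homogeneousSubmodule (Fin 3) K i) = (i + 2).choose i := by
  rw [Module.finrank_eq_card_basis (homogBasis K i), card_deg]

/-- The Hilbert function of `S/(ff)` in degree `j + 2`. -/
lemma hfn_span (j : ℕ) :
    hfn (Ideal.span {ff}) (j + 2) = (j + 4).choose (j + 2) - (j + 2).choose j := by
  set K := ZMod 2
  set I := Ideal.span {ff}
  set p := homogeneousSubmodule (Fin 3) K (j + 2) with hp
  set φ := (Ideal.Quotient.mkₐ K I).toLinearMap with hφ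
  have hmap : Submodule.map φ p = LinearMap.range (φ ∘ₗ p.subtype) := by
    rw [LinearMap.range_comp, Submodule.range_subtype]
  have hrn := LinearMap.finrank_range_add_finrank_ker (φ ∘ₗ p.subtype)
  have hkerφ : LinearMap.ker φ = I.restrictScalars K := by
    ext x
    simp only [LinearMap.mem_ker, hφ, AlgHom.toLinearMap_apply, Ideal.Quotient.mkₐ_eq_mk,
      Submodule.restrictScalars_mem]
    exact Ideal.Quotient.eq_zero_iff_mem
  have hker : LinearMap.ker (φ ∘ₗ p.subtype)
      = Submodule.comap p.subtype (I.restrictScalars K ⊓ p) := by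
    rw [LinearMap.ker_comp, hkerφ, Submodule.comap_inf, Submodule.comap_subtype_self, inf_top_eq]
  have e1 : (LinearMap.ker (φ ∘ₗ p.subtype)) ≃ₗ[K] (I.restrictScalars K ⊓ p : Submodule K _) := by
    rw [hker]; exact Submodule.comapSubtypeEquivOfLe inf_le_right
  have e2 : (I.restrictScalars K ⊓ p : Submodule K _) ≃ₗ[K] LinearMap.range (mulF j) := by
    rw [inf_eq j]
  have hkerrank : Module.finrank K (LinearMap.ker (φ ∘ₗ p.subtype)) = (j + 2).choose j := by
    rw [e1.finrank_eq, e2.finrank_eq, LinearMap.finrank_range_of_inj (mulF_inj j), finrank_homog]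
  have hdom : Module.finrank K p = (j + 4).choose (j + 2) := by
    rw [hp, finrank_homog]
  rw [hfn, hmap]
  have key : Module.finrank K (LinearMap.range (φ ∘ₗ p.subtype)) + (j + 2).choose j
      = (j + 4).choose (j + 2) := by
    rw [← hkerrank, ← hdom]; exact hrn
  exact Nat.eq_sub_of_add_eq key

lemma chooseAux (j : ℕ) : (j + 4).choose (j + 2) = (j + 2).choose j + (2 * j + 5) := by
  induction j with
  | zero => decide
  | succ n ih =>
    have h1 : (n + 1 + 4).choose (n + 1 + 2) = (n + 4).choose (n + 2) + (n + 4).choose (n + 3) :=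
      Nat.choose_succ_succ _ _
    have h2 : (n + 1 + 2).choose (n + 1) = (n + 2).choose n + (n + 2).choose (n + 1) :=
      Nat.choose_succ_succ _ _
    have h3 : (n + 4).choose (n + 3) = n + 4 := by
      rw [show n + 3 = (n + 4) - 1 by omega, Nat.choose_symm (by omega), Nat.choose_one_right]
    have h4 : (n + 2).choose (n + 1) = n + 2 := by
      rw [show n + 1 = (n + 2) - 1 by omega, Nat.choose_symm (by omega), Nat.choose_one_right]
    omega

/-- `ff` is invariant under every invertible upper-triangular substitution. -/
lemma borel_fix (γ : Matrix (Fin 3) (Fin 3) (ZMod 2)) (hu : UpperTriangular γ)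
    (hd : IsUnit γ.det) : borelAct γ (ff : S3) = ff := by
  have hbt : γ.BlockTriangular id := fun i j h => hu i j h
  have hdet : γ.det = γ 0 0 * (γ 1 1 * (γ 2 2 * 1)) := by
    rw [Matrix.det_of_upperTriangular hbt]
    simp [Fin.prod_univ_three, mul_assoc]
  have hne : γ.det ≠ 0 := hd.ne_zero
  rw [hdet] at hne
  have h00 : γ 0 0 = 1 := by
    revert hne; generalize γ 0 0 = a; generalize γ 1 1 = b; generalize γ 2 2 = c
    revert a b c; decide
  have h11 : γ 1 1 = 1 := by
    revert hne; generalize γ 0 0 = a; generalize γ 1 1 = b; generalize γ 2 2 = c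
    revert a b c; decide
  have h10 : γ 1 0 = 0 := hu 1 0 (by decide)
  have h20 : γ 2 0 = 0 := hu 2 0 (by decide)
  have h21 : γ 2 1 = 0 := hu 2 1 (by decide)
  simp only [borelAct, AlgHom.toRingHom_eq_coe, RingHom.coe_coe, map_add, map_mul, map_pow,
    aeval_X, Fin.sum_univ_three, h10, h20, h21, h00, h11, map_zero, map_one, zero_mul, one_mul,
    zero_add, add_zero]
  have h1 : (C (γ 0 1) : S3) * C (γ 0 1) + C (γ 0 1) = 0 := by
    rw [← C_mul, ← C_add,
      show γ 0 1 * γ 0 1 + γ 0 1 = 0 by generalize γ 0 1 = a; revert a; decide, C_0]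
  have h2 : (C (γ 0 1) : S3) + C (γ 0 1) = 0 := by
    rw [← C_add, show γ 0 1 + γ 0 1 = 0 by generalize γ 0 1 = a; revert a; decide, C_0]
  linear_combination (X 0 : S3) ^ 2 * h1 + (X 0 * X 1 : S3) * h2

/-- Over `F_2`, the ideal `⟨x_0^2 + x_0 x_1 + x_1^2⟩ ⊂ F_2[x_0, x_1, x_2]` is Borel-fixed
and the Hilbert polynomial of the quotient is `2t + 1`. -/
theorem f2_nonmonomial_borelFixed
    (I : Ideal (MvPolynomial (Fin 3) (ZMod 2)))
    (hI : I = Ideal.span {(X 0 ^ 2 + X 0 * X 1 + X 1 ^ 2 : MvPolynomial (Fin 3) (ZMod 2))}) :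
    BorelFixed I ∧ ∃ N : ℕ, ∀ i ≥ N, (hfn I i : ℤ) = 2 * i + 1 := by
  subst hI
  constructor
  · intro γ hu hd
    rw [Ideal.map_span, Set.image_singleton, borel_fix γ hu hd]
  · refine ⟨2, fun i hi => ?_⟩
    obtain ⟨j, rfl⟩ : ∃ j, i = j + 2 := ⟨i - 2, by omega⟩
    rw [hfn_span j]
    have h := chooseAux j
    have hle : (j + 2).choose j ≤ (j + 4).choose (j + 2) := by omega
    rw [Nat.cast_sub hle]
    push_cast
    omega
end

section
/- Let L = L(a_0, ..., a_{n-1}) ⊂ K[x_0, ..., x_n] be the monomial ideal generated by x_0^{a_{n-1}+1}, x_0^{a_{n-1}} x_1^{a_{n-2}+1}, ..., x_0^{a_{n-1}} x_1^{a_{n-2}} ⋯ x_{n-2}^{a_1+1}, and x_0^{a_{n-1}} x_1^{a_{n-2}} ⋯ x_{n-2}^{a_1} x_{n-1}^{a_0}, for nonnegative integers a_0, ..., a_{n-1}. Then L is a lex-segment ideal: for every degree i, the monomials of degree i in L form an initial segment of the monomials of K[x_0,...,x_n]_i in lexicographic order. -/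
open MvPolynomial

/-- The ideal `L(a_0, …, a_{n-1})` with generators
`x_0^{a_{n-1}+1}, x_0^{a_{n-1}} x_1^{a_{n-2}+1}, …, x_0^{a_{n-1}} ⋯ x_{n-2}^{a_1+1},
x_0^{a_{n-1}} ⋯ x_{n-2}^{a_1} x_{n-1}^{a_0}` is a lex-segment ideal: in each degree, the
monomials it contains form an initial segment in lexicographic order (`x_0 > x_1 > ⋯ > x_n`). -/
theorem L_is_lexSegment {K : Type} [Field K] (n : ℕ) (hn : 1 ≤ n) (a : ℕ → ℕ)
    (L : Ideal (MvPolynomial (Fin (n + 1)) K))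
    (hL : L = Ideal.span (Set.range (fun k : Fin n =>
      (∏ t ∈ Finset.univ.filter (fun t : Fin n => t < k),
          (X t.castSucc : MvPolynomial (Fin (n + 1)) K) ^ a (n - 1 - (t : ℕ))) *
        X k.castSucc ^ (a (n - 1 - (k : ℕ)) + if (k : ℕ) = n - 1 then 0 else 1)))) :
    ∀ u v : Fin (n + 1) →₀ ℕ, (∑ i, u i) = (∑ i, v i) →
      (monomial u 1 : MvPolynomial (Fin (n + 1)) K) ∈ L →
      ((∃ i : Fin (n + 1), u i < v i ∧ ∀ k < i, u k = v k) ∨ u = v) →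
      (monomial v 1 : MvPolynomial (Fin (n + 1)) K) ∈ L := by
  -- abbreviate the extra exponent
  set e : Fin n → ℕ := fun k => if (k : ℕ) = n - 1 then 0 else 1 with he
  have he1 : ∀ k, e k ≤ 1 := by
    intro k; simp only [he]; split <;> omega
  -- the exponent vectors of the generators
  set w : Fin n → (Fin (n + 1) →₀ ℕ) := fun k =>
    (∑ t ∈ Finset.univ.filter (fun t : Fin n => t < k),
      Finsupp.single t.castSucc (a (n - 1 - (t : ℕ)))) +
    Finsupp.single k.castSucc (a (n - 1 - (k : ℕ)) + e k) with hw
  -- the generators are the monomials with exponents `w k`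
  have hgen : (fun k : Fin n =>
      (∏ t ∈ Finset.univ.filter (fun t : Fin n => t < k),
          (X t.castSucc : MvPolynomial (Fin (n + 1)) K) ^ a (n - 1 - (t : ℕ))) *
        X k.castSucc ^ (a (n - 1 - (k : ℕ)) + if (k : ℕ) = n - 1 then 0 else 1)) =
      fun k => (monomial (w k) 1 : MvPolynomial (Fin (n + 1)) K) := by
    funext k
    simp only [hw, he, X_pow_eq_monomial, ← monomial_sum_one, monomial_mul, mul_one]
  have hLw : L = Ideal.span ((fun s => (monomial s 1 : MvPolynomial (Fin (n + 1)) K)) ''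
      Set.range w) := by
    rw [hL, hgen, ← Set.range_comp]
    rfl
  -- membership criterion for monomials
  have hmem : ∀ x : Fin (n + 1) →₀ ℕ,
      (monomial x 1 : MvPolynomial (Fin (n + 1)) K) ∈ L ↔ ∃ k, w k ≤ x := by
    intro x
    rw [hLw, mem_ideal_span_monomial_image]
    simp [support_monomial]
  -- coordinates of `w k`
  have hco : ∀ k t : Fin n, (w k) t.castSucc =
      (if t < k then a (n - 1 - (t : ℕ)) else 0) +
      (if k = t then a (n - 1 - (k : ℕ)) + e k else 0) := by
    intro k t
    simp only [hw, Finsupp.add_apply, Finsupp.finset_sum_apply, Finsupp.single_apply,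
      Fin.castSucc_inj]
    congr 1
    rw [Finset.sum_ite_eq' (Finset.univ.filter (fun t : Fin n => t < k)) t
      (fun t : Fin n => a (n - 1 - (t : ℕ)))]
    simp
  have hlast : ∀ k, (w k) (Fin.last n) = 0 := by
    intro k
    simp only [hw, Finsupp.add_apply, Finsupp.finset_sum_apply]
    rw [Finset.sum_eq_zero fun t _ => Finsupp.single_eq_of_ne' (Fin.castSucc_lt_last t).ne,
      Finsupp.single_eq_of_ne' (Fin.castSucc_lt_last k).ne, add_zero]
  -- main argument
  intro u v hsum humem hlex
  rcases hlex with ⟨i, hui, hagree⟩ | rfl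
  · -- `i` cannot be the last coordinate, by equal total degrees
    have hine : i ≠ Fin.last n := by
      intro h
      subst h
      rw [Fin.sum_univ_castSucc, Fin.sum_univ_castSucc] at hsum
      have : ∀ t : Fin n, u t.castSucc = v t.castSucc := fun t =>
        hagree _ (Fin.castSucc_lt_last t)
      have : (∑ t : Fin n, u t.castSucc) = ∑ t : Fin n, v t.castSucc :=
        Finset.sum_congr rfl fun t _ => this t
      omega
    obtain ⟨i', rfl⟩ := Fin.exists_castSucc_eq.2 hine
    obtain ⟨k, hk⟩ := (hmem u).1 humem
    have hk' := fun j => hk j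
    rw [hmem]
    have hka : ∀ t : Fin n, t ≤ k → a (n - 1 - (t : ℕ)) ≤ u t.castSucc := by
      intro t ht
      have := hk' t.castSucc
      rw [hco] at this
      rcases eq_or_lt_of_le ht with rfl | hlt
      · rw [if_neg (lt_irrefl t), if_pos rfl] at this
        omega
      · rw [if_pos hlt, if_neg (ne_of_gt hlt)] at this
        omega
    by_cases hik : i' ≤ k
    · -- use the generator `w i'`
      refine ⟨i', fun j => ?_⟩
      induction j using Fin.lastCases with
      | last => rw [hlast]; exact Nat.zero_le _
      | cast t =>
        rw [hco]
        by_cases hti : t < i'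
        · rw [if_pos hti, if_neg (ne_of_gt hti), add_zero,
            ← hagree t.castSucc (Fin.castSucc_lt_castSucc_iff.2 hti)]
          exact hka t (le_of_lt (lt_of_lt_of_le hti hik))
        · by_cases hti' : i' = t
          · subst hti'
            rw [if_neg hti, if_pos rfl, zero_add]
            have h1 : a (n - 1 - (i' : ℕ)) ≤ u i'.castSucc := hka i' hik
            have h2 : e i' ≤ 1 := he1 i'
            omega
          · rw [if_neg hti, if_neg hti']
            exact Nat.zero_le _
    · -- `k < i'`: the generator `w k` still divides `v`
      push_neg at hik
      refine ⟨k, fun j => ?_⟩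
      induction j using Fin.lastCases with
      | last => rw [hlast]; exact Nat.zero_le _
      | cast t =>
        by_cases hti : t < i'
        · rw [← hagree t.castSucc (by exact Fin.castSucc_lt_castSucc_iff.2 hti)]
          exact hk' t.castSucc
        · have htk : k < t := lt_of_lt_of_le hik (not_lt.1 hti)
          rw [hco, if_neg (not_lt.2 htk.le), if_neg htk.ne]
          exact Nat.zero_le _
  · exact humem
end
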